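/- arXiv:1802.09015 — 4 statements merged into one kernel-verified Lean document; each statement's English description precedes it below -/
import Mathlib

section
/- For all 1 ≤ k ≤ m ≤ n, every interval system I ∈ IS(n), every strictly increasing vector j = (j₁,…,j_m) ∈ [m:n] and every strictly increasing vector h = (h₁,…,h_k) ∈ [k:m], one has φ^m_k(φ^n_m(I, j), h) = φ^n_k(I, (j_{h₁},…,j_{h_k})). -/
open TopologicalSpace Filter Set MeasureTheory ProbabilityTheory
open scoped ENNReal symmDiff

noncomputable section

/-- The triangle `▲ = {(x,y) ∈ ℝ² : 0 ≤ x ≤ y ≤ 1}`. -/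
def Tri : Set (ℝ × ℝ) := {p | 0 ≤ p.1 ∧ p.1 ≤ p.2 ∧ p.2 ≤ 1}

/-- The diagonal `Δ = {(x,x) : x ∈ [0,1]}`. -/
def Diag : Set (ℝ × ℝ) := {p | ∃ x : ℝ, 0 ≤ x ∧ x ≤ 1 ∧ p = (x, x)}

/-- Membership in `IS(∞)`: compact subsets of the triangle containing the diagonal. -/
def MemISinf (K : Set (ℝ × ℝ)) : Prop := IsCompact K ∧ K ⊆ Tri ∧ Diag ⊆ K

/-- `IsIS n I`: `I` is an interval system on `[n] = {1,…,n}`: it contains `∅` and all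
singletons `{j}`, `j ∈ [n]`, and every nonempty element is an interval `[a,b] ⊆ [n]`. -/
def IsIS (n : ℕ) (I : Set (Finset ℕ)) : Prop :=
  (∅ : Finset ℕ) ∈ I ∧ (∀ j : ℕ, 1 ≤ j → j ≤ n → ({j} : Finset ℕ) ∈ I) ∧
    ∀ e ∈ I, e ≠ (∅ : Finset ℕ) → ∃ a b : ℕ, 1 ≤ a ∧ a ≤ b ∧ b ≤ n ∧ e = Finset.Icc a b

/-- Extension of a vector `(u₁,…,u_k)` by the conventions `u₀ := -1`, `u_{k+1} := 2`. -/
def uext (k : ℕ) (u : ℕ → ℝ) : ℕ → ℝ := fun i => if i = 0 then -1 else if i ≤ k then u i else 2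

/-- The sampling map `φ^∞_k`: it contains `∅`, all singletons, and exactly those intervals
`[a,b]`, `1 ≤ a < b ≤ k`, for which `K ∩ (u_{a-1},u_a) × (u_b,u_{b+1}) ≠ ∅`. -/
def phiInf (k : ℕ) (K : Set (ℝ × ℝ)) (u : ℕ → ℝ) : Set (Finset ℕ) :=
  {e | e = (∅ : Finset ℕ)} ∪ {e | ∃ j : ℕ, 1 ≤ j ∧ j ≤ k ∧ e = {j}} ∪
    {e | ∃ a b : ℕ, 1 ≤ a ∧ a < b ∧ b ≤ k ∧ e = Finset.Icc a b ∧
      ∃ p ∈ K, uext k u (a - 1) < p.1 ∧ p.1 < uext k u a ∧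
        uext k u b < p.2 ∧ p.2 < uext k u (b + 1)}

/-- Extension of `(j₁,…,j_k) ∈ [k:n]` by the conventions `j₀ := -n`, `j_{k+1} := 2n`. -/
def jext (n k : ℕ) (j : ℕ → ℕ) : ℕ → ℤ :=
  fun i => if i = 0 then -(n : ℤ) else if i ≤ k then (j i : ℤ) else 2 * n

/-- The finite sampling map `φ^n_k`: `[a,b] ∈ φ^n_k(I,j)` iff some `[A,B] ∈ I` satisfies
`j_{a-1} < A ≤ j_a ≤ j_b ≤ B < j_{b+1}`; together with `∅`. -/
def phiFin (n k : ℕ) (I : Set (Finset ℕ)) (j : ℕ → ℕ) : Set (Finset ℕ) :=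
  {e | e = (∅ : Finset ℕ)} ∪
    {e | ∃ a b : ℕ, 1 ≤ a ∧ a ≤ b ∧ b ≤ k ∧ e = Finset.Icc a b ∧
      ∃ A B : ℕ, A ≤ B ∧ Finset.Icc A B ∈ I ∧
        jext n k j (a - 1) < (A : ℤ) ∧ (A : ℤ) ≤ jext n k j a ∧
        jext n k j a ≤ jext n k j b ∧ jext n k j b ≤ (B : ℤ) ∧ (B : ℤ) < jext n k j (b + 1)}

/-- Removing the element `k` from the interval `[a,b]`: it becomes `[a-1,b-1]` if `k < a`,
`[a,b-1]` if `a ≤ k ≤ b`, and stays `[a,b]` if `b < k`. -/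
def eraseElem (k a b : ℕ) : Finset ℕ :=
  if b < k then Finset.Icc a b else if k < a then Finset.Icc (a - 1) (b - 1) else Finset.Icc a (b - 1)

/-- The one-step erasing map `φ^{n+1}_n(⬝, k)`, removing `k` from every interval. -/
def phiStep (I : Set (Finset ℕ)) (k : ℕ) : Set (Finset ℕ) :=
  {e | e = (∅ : Finset ℕ)} ∪
    {e | ∃ a b : ℕ, a ≤ b ∧ Finset.Icc a b ∈ I ∧ e = eraseElem k a b}

/-- The scaled interval system `n⁻¹I = {((a-1)/n, b/n) : ∅ ≠ [a,b] ∈ I} ∪ Δ ⊆ ▲`. -/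
def scaleIS (n : ℕ) (I : Set (Finset ℕ)) : Set (ℝ × ℝ) :=
  {p | ∃ a b : ℕ, 1 ≤ a ∧ a ≤ b ∧ Finset.Icc a b ∈ I ∧
        p = (((a : ℝ) - 1) / n, (b : ℝ) / n)} ∪ Diag

/-- `orderStat k u i` : the `i`-th smallest among `u 1, …, u k`  (for `1 ≤ i ≤ k`). -/
def orderStat (k : ℕ) (u : ℕ → ℝ) (i : ℕ) : ℝ :=
  (Multiset.sort (Multiset.map u (Finset.Icc 1 k).val) (· ≤ ·)).getD (i - 1) 0

/-- The ℓ¹-distance `d((x₁,y₁),(x₂,y₂)) = |x₁-x₂| + |y₁-y₂|` on `ℝ²`. -/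
def dist1 (p q : ℝ × ℝ) : ℝ := |p.1 - q.1| + |p.2 - q.2|

/-- The Hausdorff distance associated with the ℓ¹-distance on `ℝ²`. -/
def hd1 (K L : Set (ℝ × ℝ)) : ℝ :=
  max (sSup ((fun p => sInf (dist1 p '' L)) '' K))
      (sSup ((fun p => sInf (dist1 p '' K)) '' L))

/-- `enumOf s r` : the `r`-th smallest element of the finite set `s` (`1`-based). -/
def enumOf (s : Finset ℕ) (r : ℕ) : ℕ := (s.sort (· ≤ ·)).getD (r - 1) 0

private lemma jext_zero' (n k : ℕ) (j : ℕ → ℕ) : jext n k j 0 = -(n : ℤ) := by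
  simp [jext]

private lemma jext_mid' (n k : ℕ) (j : ℕ → ℕ) {i : ℕ} (h1 : 1 ≤ i) (h2 : i ≤ k) :
    jext n k j i = (j i : ℤ) := by
  have h0 : i ≠ 0 := by omega
  simp [jext, h0, h2]

private lemma jext_big' (n k : ℕ) (j : ℕ → ℕ) {i : ℕ} (h2 : k < i) :
    jext n k j i = 2 * n := by
  have h0 : i ≠ 0 := by omega
  have h3 : ¬ i ≤ k := by omega
  simp [jext, h0, h3]

private lemma icc_eq_icc' {a b a' b' : ℕ} (hab : a ≤ b)
    (h : Finset.Icc a b = Finset.Icc a' b') : a = a' ∧ b = b' := by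
  have h1 : a ∈ Finset.Icc a' b' := by rw [← h]; exact Finset.mem_Icc.mpr ⟨le_rfl, hab⟩
  have h2 : b ∈ Finset.Icc a' b' := by rw [← h]; exact Finset.mem_Icc.mpr ⟨hab, le_rfl⟩
  rw [Finset.mem_Icc] at h1 h2
  have ha'b' : a' ≤ b' := by omega
  have h3 : a' ∈ Finset.Icc a b := by rw [h]; exact Finset.mem_Icc.mpr ⟨le_rfl, ha'b'⟩
  have h4 : b' ∈ Finset.Icc a b := by rw [h]; exact Finset.mem_Icc.mpr ⟨ha'b', le_rfl⟩
  rw [Finset.mem_Icc] at h3 h4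
  omega

/-- For `1 ≤ k ≤ m ≤ n`, an interval system `I ∈ IS(n)` and strictly
increasing vectors `j ∈ [m:n]`, `h ∈ [k:m]`:
`φ^m_k(φ^n_m(I, j), h) = φ^n_k(I, (j_{h₁},…,j_{h_k}))`. -/
theorem stmt1 (n m k : ℕ) (hk : 1 ≤ k) (hkm : k ≤ m) (hmn : m ≤ n)
    (I : Set (Finset ℕ)) (hI : IsIS n I)
    (j : ℕ → ℕ) (hjmono : StrictMonoOn j (Set.Icc 1 m))
    (hjval : ∀ i, 1 ≤ i → i ≤ m → 1 ≤ j i ∧ j i ≤ n)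
    (h : ℕ → ℕ) (hhmono : StrictMonoOn h (Set.Icc 1 k))
    (hhval : ∀ i, 1 ≤ i → i ≤ k → 1 ≤ h i ∧ h i ≤ m) :
    phiFin m k (phiFin n m I j) h = phiFin n k I (fun r => j (h r)) := by
  classical
  have hm1 : 1 ≤ m := le_trans hk hkm
  have hn1 : 1 ≤ n := le_trans hm1 hmn
  have jmono : ∀ x y : ℕ, 1 ≤ x → x ≤ y → y ≤ m → j x ≤ j y := by
    intro x y h1 h2 h3
    rcases eq_or_lt_of_le h2 with rfl | hlt
    · exact le_rfl
    · exact le_of_lt (hjmono ⟨h1, by omega⟩ ⟨by omega, h3⟩ hlt)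
  have hmono : ∀ x y : ℕ, 1 ≤ x → x ≤ y → y ≤ k → h x ≤ h y := by
    intro x y h1 h2 h3
    rcases eq_or_lt_of_le h2 with rfl | hlt
    · exact le_rfl
    · exact le_of_lt (hhmono ⟨h1, by omega⟩ ⟨by omega, h3⟩ hlt)
  ext e
  simp only [phiFin, Set.mem_union, Set.mem_setOf_eq]
  constructor
  · rintro (he | ⟨a, b, ha1, hab, hbk, he, A, B, hAB, hmem, c1, c2, c3, c4, c5⟩)
    · exact Or.inl he
    right
    rcases hmem with hemp | ⟨a', b', ha'1, ha'b', hb'm, hicc, A0, B0, hA0B0, hI0,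
        d1, d2, d3, d4, d5⟩
    · exact absurd hAB (Finset.Icc_eq_empty_iff.mp hemp)
    obtain ⟨rfl, rfl⟩ := icc_eq_icc' hAB hicc
    -- now: 1 ≤ A, A ≤ B, B ≤ m, inner witnesses A0 B0
    have hak : a ≤ k := le_trans hab hbk
    have hha := hhval a ha1 hak
    have hhb := hhval b (by omega) hbk
    -- translate outer conditions
    have e2 : jext m k h a = (h a : ℤ) := jext_mid' m k h ha1 hak
    have e3 : jext m k h b = (h b : ℤ) := jext_mid' m k h (by omega) hbk
    rw [e2] at c2
    rw [e3] at c4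
    have hAha : A ≤ h a := by exact_mod_cast c2
    have hhbB : h b ≤ B := by exact_mod_cast c4
    -- translate inner conditions
    have f2 : jext n m j A = (j A : ℤ) := jext_mid' n m j ha'1 (le_trans ha'b' hb'm)
    have f3 : jext n m j B = (j B : ℤ) := jext_mid' n m j (by omega) hb'm
    rw [f2] at d2
    rw [f3] at d4
    refine ⟨a, b, ha1, hab, hbk, he, A0, B0, hA0B0, hI0, ?_, ?_, ?_, ?_, ?_⟩
    · -- jext n k (j∘h) (a-1) < A0
      by_cases ha : a = 1
      · have : jext n k (fun r => j (h r)) (a - 1) = -(n : ℤ) := by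
          rw [show a - 1 = 0 by omega]; exact jext_zero' n k _
        rw [this]
        have : (0 : ℤ) ≤ (A0 : ℤ) := Int.natCast_nonneg _
        omega
      · have ha2 : 2 ≤ a := by omega
        have hprev := hhval (a - 1) (by omega) (by omega)
        have e1 : jext m k h (a - 1) = (h (a - 1) : ℤ) :=
          jext_mid' m k h (by omega) (by omega)
        rw [e1] at c1
        have hhpA : h (a - 1) < A := by exact_mod_cast c1
        have hA2 : 2 ≤ A := by omega
        have g1 : jext n m j (A - 1) = (j (A - 1) : ℤ) :=
          jext_mid' n m j (by omega) (by omega)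
        rw [g1] at d1
        have hjm : j (h (a - 1)) ≤ j (A - 1) := jmono _ _ hprev.1 (by omega) (by omega)
        have e1' : jext n k (fun r => j (h r)) (a - 1) = (j (h (a - 1)) : ℤ) :=
          jext_mid' n k _ (by omega) (by omega)
        rw [e1']
        omega
    · have e2' : jext n k (fun r => j (h r)) a = (j (h a) : ℤ) :=
        jext_mid' n k _ ha1 hak
      rw [e2']
      have : j A ≤ j (h a) := jmono _ _ ha'1 hAha hha.2
      omega
    · have e2' : jext n k (fun r => j (h r)) a = (j (h a) : ℤ) :=
        jext_mid' n k _ ha1 hak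
      have e3' : jext n k (fun r => j (h r)) b = (j (h b) : ℤ) :=
        jext_mid' n k _ (by omega) hbk
      rw [e2', e3']
      have h1 : h a ≤ h b := hmono a b ha1 hab hbk
      have : j (h a) ≤ j (h b) := jmono _ _ hha.1 h1 hhb.2
      omega
    · have e3' : jext n k (fun r => j (h r)) b = (j (h b) : ℤ) :=
        jext_mid' n k _ (by omega) hbk
      rw [e3']
      have : j (h b) ≤ j B := jmono _ _ hhb.1 hhbB hb'm
      omega
    · by_cases hb : b = k
      · have e4 : jext n k (fun r => j (h r)) (b + 1) = 2 * n :=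
          jext_big' n k _ (by omega)
        rw [e4]
        have hle : jext n m j (B + 1) ≤ 2 * n := by
          by_cases hc : B + 1 ≤ m
          · rw [jext_mid' n m j (by omega) hc]
            have := (hjval (B + 1) (by omega) hc).2
            omega
          · rw [jext_big' n m j (by omega)]
        omega
      · have hb1k : b + 1 ≤ k := by omega
        have e4 : jext m k h (b + 1) = (h (b + 1) : ℤ) :=
          jext_mid' m k h (by omega) hb1k
        rw [e4] at c5
        have hBh : B < h (b + 1) := by exact_mod_cast c5
        have hnext := hhval (b + 1) (by omega) hb1k
        have g5 : jext n m j (B + 1) = (j (B + 1) : ℤ) :=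
          jext_mid' n m j (by omega) (by omega)
        rw [g5] at d5
        have hjm : j (B + 1) ≤ j (h (b + 1)) := jmono _ _ (by omega) (by omega) hnext.2
        have e4' : jext n k (fun r => j (h r)) (b + 1) = (j (h (b + 1)) : ℤ) :=
          jext_mid' n k _ (by omega) hb1k
        rw [e4']
        omega
  · rintro (he | ⟨a, b, ha1, hab, hbk, he, A0, B0, hA0B0, hI0, d1, d2, d3, d4, d5⟩)
    · exact Or.inl he
    right
    have hak : a ≤ k := le_trans hab hbk
    have hha := hhval a ha1 hak
    have hhb := hhval b (by omega) hbk
    have e2 : jext n k (fun r => j (h r)) a = (j (h a) : ℤ) := jext_mid' n k _ ha1 hak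
    have e3 : jext n k (fun r => j (h r)) b = (j (h b) : ℤ) := jext_mid' n k _ (by omega) hbk
    rw [e2] at d2
    rw [e3] at d4
    have hA0ja : A0 ≤ j (h a) := by exact_mod_cast d2
    have hjbB0 : j (h b) ≤ B0 := by exact_mod_cast d4
    -- define A : minimal index with 1 ≤ A and A0 ≤ j A
    have hex : ∃ i, 1 ≤ i ∧ A0 ≤ j i := ⟨h a, hha.1, hA0ja⟩
    set A := Nat.find hex with hAdef
    have hAspec : 1 ≤ A ∧ A0 ≤ j A := Nat.find_spec hex
    have hAle : A ≤ h a := Nat.find_min' hex ⟨hha.1, hA0ja⟩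
    have hAm : A ≤ m := le_trans hAle hha.2
    -- define B : maximal index ≤ m with j B ≤ B0
    set B := Nat.findGreatest (fun i => j i ≤ B0) m with hBdef
    have hBge : h b ≤ B := Nat.le_findGreatest hhb.2 hjbB0
    have hBle : B ≤ m := Nat.findGreatest_le m
    have hBspec : j B ≤ B0 := Nat.findGreatest_spec (P := fun i => j i ≤ B0) hhb.2 hjbB0
    have hab' : h a ≤ h b := hmono a b ha1 hab hbk
    have hAB : A ≤ B := le_trans hAle (le_trans hab' hBge)
    refine ⟨a, b, ha1, hab, hbk, he, A, B, hAB, ?_, ?_, ?_, ?_, ?_, ?_⟩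
    · -- membership in phiFin n m I j (unfolded)
      right
      refine ⟨A, B, hAspec.1, hAB, hBle, rfl, A0, B0, hA0B0, hI0, ?_, ?_, ?_, ?_, ?_⟩
      · by_cases hA1 : A = 1
        · rw [show A - 1 = 0 by omega, jext_zero' n m j]
          have : (0 : ℤ) ≤ (A0 : ℤ) := Int.natCast_nonneg _
          omega
        · have hA2 : 2 ≤ A := by omega
          have hnot : ¬ (1 ≤ A - 1 ∧ A0 ≤ j (A - 1)) := Nat.find_min hex (by omega)
          have hlt : j (A - 1) < A0 := by
            by_contra hcon
            exact hnot ⟨by omega, by omega⟩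
          rw [jext_mid' n m j (by omega) (by omega)]
          exact_mod_cast hlt
      · rw [jext_mid' n m j hAspec.1 hAm]
        exact_mod_cast hAspec.2
      · rw [jext_mid' n m j hAspec.1 hAm, jext_mid' n m j (by omega) hBle]
        exact_mod_cast jmono A B hAspec.1 hAB hBle
      · rw [jext_mid' n m j (by omega) hBle]
        exact_mod_cast hBspec
      · by_cases hBm : B = m
        · rw [jext_big' n m j (by omega)]
          have hle : jext n k (fun r => j (h r)) (b + 1) ≤ 2 * n := by
            by_cases hc : b + 1 ≤ k
            · rw [jext_mid' n k _ (by omega) hc]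
              have := (hjval (h (b + 1)) (hhval (b + 1) (by omega) hc).1
                (hhval (b + 1) (by omega) hc).2).2
              omega
            · rw [jext_big' n k _ (by omega)]
          omega
        · have hlt : ¬ (j (B + 1) ≤ B0) := by
            apply Nat.findGreatest_is_greatest (P := fun i => j i ≤ B0) (n := m)
            · rw [← hBdef]; omega
            · omega
          rw [jext_mid' n m j (by omega) (by omega)]
          have : B0 < j (B + 1) := by omega
          exact_mod_cast this
    · -- jext m k h (a-1) < A
      by_cases hA1 : a = 1
      · rw [show a - 1 = 0 by omega, jext_zero' m k h]
        have : (0 : ℤ) ≤ (A : ℤ) := Int.natCast_nonneg _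
        omega
      · have hprev := hhval (a - 1) (by omega) (by omega)
        have e1 : jext n k (fun r => j (h r)) (a - 1) = (j (h (a - 1)) : ℤ) :=
          jext_mid' n k _ (by omega) (by omega)
        rw [e1] at d1
        have hlt : j (h (a - 1)) < A0 := by exact_mod_cast d1
        have : h (a - 1) < A := by
          by_contra hcon
          have : j A ≤ j (h (a - 1)) := jmono _ _ hAspec.1 (by omega) hprev.2
          omega
        rw [jext_mid' m k h (by omega) (by omega)]
        exact_mod_cast this
    · rw [jext_mid' m k h ha1 hak]
      exact_mod_cast hAle
    · rw [jext_mid' m k h ha1 hak, jext_mid' m k h (by omega) hbk]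
      exact_mod_cast hab'
    · rw [jext_mid' m k h (by omega) hbk]
      exact_mod_cast hBge
    · by_cases hbk' : b = k
      · rw [jext_big' m k h (by omega)]
        have : (B : ℤ) ≤ m := by exact_mod_cast hBle
        omega
      · have hb1k : b + 1 ≤ k := by omega
        have hnext := hhval (b + 1) (by omega) hb1k
        have e4 : jext n k (fun r => j (h r)) (b + 1) = (j (h (b + 1)) : ℤ) :=
          jext_mid' n k _ (by omega) hb1k
        rw [e4] at d5
        have hlt : B0 < j (h (b + 1)) := by exact_mod_cast d5
        have : B < h (b + 1) := by
          by_contra hcon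
          have : j (h (b + 1)) ≤ j B := jmono _ _ hnext.1 (by omega) hBle
          omega
        rw [jext_mid' m k h (by omega) hb1k]
        exact_mod_cast this
end
end

section
/- For every k ∈ ℕ, the map φ^∞_k : IS(∞) × [0,1]^k_< → IS(k) is Borel measurable, where IS(∞) carries the topology of the Hausdorff metric, [0,1]^k_< := {(u₁,…,u_k) : 0 ≤ u₁ < … < u_k ≤ 1} carries the Euclidean topology, and the finite set IS(k) is discrete. -/
open TopologicalSpace Filter Set MeasureTheory ProbabilityTheory
open scoped ENNReal symmDiff

noncomputable section

instance instMSSetFinset : MeasurableSpace (Set (Finset ℕ)) := ⊤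

instance instMSNC : MeasurableSpace (NonemptyCompacts (ℝ × ℝ)) := borel _

instance instBSNC : BorelSpace (NonemptyCompacts (ℝ × ℝ)) := ⟨rfl⟩


section Aux

lemma isOpen_hits (U : Set (ℝ × ℝ)) (hU : IsOpen U) :
    IsOpen {K : NonemptyCompacts (ℝ × ℝ) | ∃ p ∈ (K : Set (ℝ × ℝ)), p ∈ U} := by
  rw [Metric.isOpen_iff]
  rintro K ⟨p, hpK, hpU⟩
  obtain ⟨ε, εpos, hball⟩ := Metric.isOpen_iff.1 hU p hpU
  refine ⟨ε, εpos, fun K' hK' => ?_⟩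
  rw [Metric.mem_ball, Metric.NonemptyCompacts.dist_eq] at hK'
  obtain ⟨q, hqK', hq⟩ := Metric.exists_dist_lt_of_hausdorffDist_lt' hpK hK'
    (Metric.hausdorffEdist_ne_top_of_nonempty_of_bounded K'.nonempty K.nonempty
      K'.isCompact.isBounded K.isCompact.isBounded)
  exact ⟨q, hqK', hball (by rwa [Metric.mem_ball])⟩

lemma measurable_uext (k i : ℕ) : Measurable (fun u : ℕ → ℝ => uext k u i) := by
  unfold uext
  split_ifs with h1 h2
  · exact measurable_const
  · exact measurable_pi_apply i
  · exact measurable_const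

/-- The event `K ∩ (u_{a-1},u_a) × (u_b,u_{b+1}) ≠ ∅` as a subset of the ambient product. -/
def EvS (k a b : ℕ) : Set (NonemptyCompacts (ℝ × ℝ) × (ℕ → ℝ)) :=
  {x | ∃ p ∈ (x.1 : Set (ℝ × ℝ)), uext k x.2 (a - 1) < p.1 ∧ p.1 < uext k x.2 a ∧
        uext k x.2 b < p.2 ∧ p.2 < uext k x.2 (b + 1)}

lemma measurableSet_EvS (k a b : ℕ) : MeasurableSet (EvS k a b) := by
  have heq : EvS k a b = ⋃ q : ℚ × ℚ × ℚ × ℚ,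
      ({K : NonemptyCompacts (ℝ × ℝ) | ∃ p ∈ (K : Set (ℝ × ℝ)),
          p ∈ Set.Ioo (q.1 : ℝ) (q.2.1 : ℝ) ×ˢ Set.Ioo (q.2.2.1 : ℝ) (q.2.2.2 : ℝ)}) ×ˢ
      ({u : ℕ → ℝ | uext k u (a - 1) ≤ (q.1 : ℝ) ∧ (q.2.1 : ℝ) ≤ uext k u a ∧
          uext k u b ≤ (q.2.2.1 : ℝ) ∧ (q.2.2.2 : ℝ) ≤ uext k u (b + 1)}) := by
    ext x
    constructor
    · rintro ⟨p, hpK, h1, h2, h3, h4⟩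
      obtain ⟨q1, hq1, hq1'⟩ := exists_rat_btwn h1
      obtain ⟨q2, hq2, hq2'⟩ := exists_rat_btwn h2
      obtain ⟨q3, hq3, hq3'⟩ := exists_rat_btwn h3
      obtain ⟨q4, hq4, hq4'⟩ := exists_rat_btwn h4
      exact Set.mem_iUnion.2 ⟨(q1, q2, q3, q4),
        ⟨⟨p, hpK, ⟨hq1', hq2⟩, ⟨hq3', hq4⟩⟩, hq1.le, hq2'.le, hq3.le, hq4'.le⟩⟩
    · intro h
      obtain ⟨⟨q1, q2, q3, q4⟩, ⟨⟨p, hpK, ⟨h1, h2⟩, ⟨h3, h4⟩⟩, g1, g2, g3, g4⟩⟩ :=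
        Set.mem_iUnion.1 h
      exact ⟨p, hpK, g1.trans_lt h1, h2.trans_le g2, g3.trans_lt h3, h4.trans_le g4⟩
  rw [heq]
  refine MeasurableSet.iUnion fun q => MeasurableSet.prod ?_ ?_
  · exact (isOpen_hits _ (isOpen_Ioo.prod isOpen_Ioo)).measurableSet
  · have e : {u : ℕ → ℝ | uext k u (a - 1) ≤ (q.1 : ℝ) ∧ (q.2.1 : ℝ) ≤ uext k u a ∧
          uext k u b ≤ (q.2.2.1 : ℝ) ∧ (q.2.2.2 : ℝ) ≤ uext k u (b + 1)} =
        {u | uext k u (a - 1) ≤ (q.1 : ℝ)} ∩ ({u | (q.2.1 : ℝ) ≤ uext k u a} ∩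
          ({u | uext k u b ≤ (q.2.2.1 : ℝ)} ∩ {u | (q.2.2.2 : ℝ) ≤ uext k u (b + 1)})) := rfl
    rw [e]
    exact (measurableSet_le (measurable_uext k _) measurable_const).inter
      ((measurableSet_le measurable_const (measurable_uext k _)).inter
        ((measurableSet_le (measurable_uext k _) measurable_const).inter
          (measurableSet_le measurable_const (measurable_uext k _))))

/-- Reconstruction of `phiInf` from the pattern of events. -/
def Gmap (k : ℕ) (S : Set (Fin (k + 1) × Fin (k + 1))) : Set (Finset ℕ) :=
  {e | e = (∅ : Finset ℕ)} ∪ {e | ∃ j : ℕ, 1 ≤ j ∧ j ≤ k ∧ e = {j}} ∪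
    {e | ∃ q : Fin (k + 1) × Fin (k + 1), q ∈ S ∧ 1 ≤ (q.1 : ℕ) ∧ (q.1 : ℕ) < (q.2 : ℕ) ∧
      (q.2 : ℕ) ≤ k ∧ e = Finset.Icc (q.1 : ℕ) (q.2 : ℕ)}

lemma phiInf_eq_Gmap (k : ℕ) (K : NonemptyCompacts (ℝ × ℝ)) (u : ℕ → ℝ) :
    phiInf k (K : Set (ℝ × ℝ)) u =
      Gmap k {q | (K, u) ∈ EvS k (q.1 : ℕ) (q.2 : ℕ)} := by
  unfold phiInf Gmap EvS
  congr 1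
  ext e
  simp only [Set.mem_setOf_eq]
  constructor
  · rintro ⟨a, b, ha, hab, hb, he, hp⟩
    exact ⟨(⟨a, by omega⟩, ⟨b, by omega⟩), hp, ha, hab, hb, he⟩
  · rintro ⟨q, hp, ha, hab, hb, he⟩
    exact ⟨(q.1 : ℕ), (q.2 : ℕ), ha, hab, hb, he, hp⟩

end Aux

/-- For every `k`, the sampling map `φ^∞_k : IS(∞) × [0,1]^k_< → IS(k)` is
Borel measurable, where `IS(∞)` carries the (Borel σ-field of the) Hausdorff metric topology,
`[0,1]^k_<` its natural (subspace) Borel structure, and the finite set `IS(k)` is discrete. -/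
theorem stmt5 (k : ℕ) :
    Measurable (fun p : {K : NonemptyCompacts (ℝ × ℝ) // MemISinf (K : Set (ℝ × ℝ))} ×
        {u : ℕ → ℝ // (∀ i, 1 ≤ i → i ≤ k → u i ∈ Set.Icc (0 : ℝ) 1) ∧
          StrictMonoOn u (Set.Icc 1 k)} =>
      phiInf k (p.1.1 : Set (ℝ × ℝ)) p.2.1) := by
  classical
  intro s _
  have hg : Measurable (fun x : {K : NonemptyCompacts (ℝ × ℝ) // MemISinf (K : Set (ℝ × ℝ))} ×
      {u : ℕ → ℝ // (∀ i, 1 ≤ i → i ≤ k → u i ∈ Set.Icc (0 : ℝ) 1) ∧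
        StrictMonoOn u (Set.Icc 1 k)} => ((x.1.1 : NonemptyCompacts (ℝ × ℝ)), x.2.1)) :=
    (measurable_subtype_coe.comp measurable_fst).prodMk
      (measurable_subtype_coe.comp measurable_snd)
  have hrep : (fun p : {K : NonemptyCompacts (ℝ × ℝ) // MemISinf (K : Set (ℝ × ℝ))} ×
        {u : ℕ → ℝ // (∀ i, 1 ≤ i → i ≤ k → u i ∈ Set.Icc (0 : ℝ) 1) ∧
          StrictMonoOn u (Set.Icc 1 k)} =>
      phiInf k (p.1.1 : Set (ℝ × ℝ)) p.2.1) ⁻¹' s =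
      ⋃ (S : Set (Fin (k + 1) × Fin (k + 1))) (_ : Gmap k S ∈ s),
        {x | ∀ q : Fin (k + 1) × Fin (k + 1),
          (x.1.1, x.2.1) ∈ EvS k (q.1 : ℕ) (q.2 : ℕ) ↔ q ∈ S} := by
    ext x
    simp only [Set.mem_preimage, Set.mem_iUnion, Set.mem_setOf_eq]
    constructor
    · intro hx
      refine ⟨{q | (x.1.1, x.2.1) ∈ EvS k (q.1 : ℕ) (q.2 : ℕ)}, ?_, fun q => Iff.rfl⟩
      rw [← phiInf_eq_Gmap]
      exact hx
    · rintro ⟨S, hS, hq⟩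
      rw [phiInf_eq_Gmap k x.1.1 x.2.1]
      have hSeq : {q : Fin (k + 1) × Fin (k + 1) |
          (x.1.1, x.2.1) ∈ EvS k (q.1 : ℕ) (q.2 : ℕ)} = S := Set.ext hq
      rw [hSeq]
      exact hS
  rw [hrep]
  refine MeasurableSet.iUnion fun S => ?_
  by_cases h : Gmap k S ∈ s
  · rw [Set.iUnion_eq_if, if_pos h]
    have : {x : {K : NonemptyCompacts (ℝ × ℝ) // MemISinf (K : Set (ℝ × ℝ))} ×
        {u : ℕ → ℝ // (∀ i, 1 ≤ i → i ≤ k → u i ∈ Set.Icc (0 : ℝ) 1) ∧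
          StrictMonoOn u (Set.Icc 1 k)} | ∀ q : Fin (k + 1) × Fin (k + 1),
        (x.1.1, x.2.1) ∈ EvS k (q.1 : ℕ) (q.2 : ℕ) ↔ q ∈ S} =
        ⋂ q : Fin (k + 1) × Fin (k + 1),
          {x | (x.1.1, x.2.1) ∈ EvS k (q.1 : ℕ) (q.2 : ℕ) ↔ q ∈ S} := by
      ext x; simp [Set.mem_iInter]
    rw [this]
    refine MeasurableSet.iInter fun q => ?_
    by_cases hq : q ∈ S
    · simp only [hq, iff_true]
      exact hg (measurableSet_EvS k _ _)
    · simp only [hq, iff_false]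
      exact (hg (measurableSet_EvS k _ _)).compl
  · rw [Set.iUnion_eq_if, if_neg h]
    exact MeasurableSet.empty

end
end

section
/- Let (U_i)_{i∈ℕ} be iid uniform on [0,1] and let (K_n)_{n∈ℕ} ⊆ IS(∞) converge to K ∈ IS(∞) in the Hausdorff metric. Then for every k ∈ ℕ, almost surely φ^∞_k(K_n, U_{1:k},…,U_{k:k}) = φ^∞_k(K, U_{1:k},…,U_{k:k}) for all sufficiently large n (i.e. the sequence converges a.s. in the discrete space IS(k)). -/
open TopologicalSpace Filter Set MeasureTheory ProbabilityTheory
open scoped ENNReal symmDiff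

noncomputable section

/-- `U` is an iid sequence of uniform([0,1]) random variables (a `U`-process). -/
def IsUniformIID {Ω : Type*} [MeasurableSpace Ω] (μ : Measure Ω) (U : ℕ → Ω → ℝ) : Prop :=
  (∀ i, Measurable (U i)) ∧ iIndepFun U μ ∧
    ∀ i, Measure.map (U i) μ = volume.restrict (Set.Icc (0 : ℝ) 1)

/-- `rankOf u n = #{i ∈ [n+1] : u i ≤ u (n+1)}`, the rank of `u (n+1)` among `u 1, …, u (n+1)`;
as a function of an iid uniform sequence `U`, this is the eraser process corresponding to `U`. -/
def rankOf (u : ℕ → ℝ) (n : ℕ) : ℕ :=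
  ((Finset.Icc 1 (n + 1)).filter (fun i => u i ≤ u (n + 1))).card

/-- The backward filtration `F_n = σ(I_m, η_m : m ≥ n)` generated by the process `(I, η)`. -/
def eipF {Ω : Type*} [MeasurableSpace Ω] (I : ℕ → Ω → Set (Finset ℕ)) (η : ℕ → Ω → ℕ)
    (n : ℕ) : MeasurableSpace Ω :=
  ⨆ m, ⨆ _ : n ≤ m, (MeasurableSpace.comap (I m) ⊤ ⊔ MeasurableSpace.comap (η m) ⊤)

/-- The tail (terminal) σ-field `F_∞ = ∩_n F_n` of the process `(I, η)`. -/
def eipTail {Ω : Type*} [MeasurableSpace Ω] (I : ℕ → Ω → Set (Finset ℕ))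
    (η : ℕ → Ω → ℕ) : MeasurableSpace Ω :=
  ⨅ n, eipF I η n

/-- `(I, η)` is an erased-interval process (EIP) with respect to `μ`:
`(I_n, η_n)` takes values in `IS(n) × [n+1]` a.s., `η_n` is uniform on `[n+1]` and independent
of `F_{n+1} = σ(I_m, η_m : m ≥ n+1)`, and `I_n = φ^{n+1}_n(I_{n+1}, η_n)` a.s. -/
structure IsEIP {Ω : Type*} [MeasurableSpace Ω] (μ : Measure Ω)
    (I : ℕ → Ω → Set (Finset ℕ)) (η : ℕ → Ω → ℕ) : Prop where
  measI : ∀ n, Measurable (I n)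
  measη : ∀ n, Measurable (η n)
  valI : ∀ n, 1 ≤ n → ∀ᵐ ω ∂μ, IsIS n (I n ω)
  valη : ∀ n, 1 ≤ n → ∀ᵐ ω ∂μ, η n ω ∈ Finset.Icc 1 (n + 1)
  unif : ∀ n, 1 ≤ n → ∀ k ∈ Finset.Icc 1 (n + 1), μ {ω | η n ω = k} = ((n : ℝ≥0∞) + 1)⁻¹
  indep : ∀ n, 1 ≤ n → Indep (MeasurableSpace.comap (η n) ⊤) (eipF I η (n + 1)) μ
  step : ∀ n, 1 ≤ n → ∀ᵐ ω ∂μ, I n ω = phiStep (I (n + 1) ω) (η n ω)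

/-- `U` is the `U`-process corresponding to the eraser process `η`. -/
def CorrespondsU {Ω : Type*} [MeasurableSpace Ω] (μ : Measure Ω)
    (η : ℕ → Ω → ℕ) (U : ℕ → Ω → ℝ) : Prop :=
  IsUniformIID μ U ∧ ∀ n, 1 ≤ n → ∀ᵐ ω ∂μ, η n ω = rankOf (fun i => U i ω) n

/-- Every `m₁`-measurable event agrees with some `m₂`-measurable event up to a `μ`-null set. -/
def NullSubset {Ω : Type*} [MeasurableSpace Ω] (μ : Measure Ω)
    (m₁ m₂ : MeasurableSpace Ω) : Prop :=
  ∀ A : Set Ω, MeasurableSet[m₁] A → ∃ B : Set Ω, MeasurableSet[m₂] B ∧ μ (symmDiff A B) = 0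

/-- Relabeling the edges of a hypergraph along a map of the vertices: `π(H) = {π(e) : e ∈ H}`. -/
def relabel (f : ℕ → ℕ) (H : Set (Finset ℕ)) : Set (Finset ℕ) :=
  {e | ∃ e' ∈ H, e = e'.image f}

/-- The restriction `H_{|k} = {e ∩ [k] : e ∈ H}` of a hypergraph. -/
def restrictH (k : ℕ) (H : Set (Finset ℕ)) : Set (Finset ℕ) :=
  {e | ∃ e' ∈ H, e = e' ∩ Finset.Icc 1 k}

/-- The permutations `S_n = b_n(η₁,…,η_{n-1})` built from a sequence of erasers:
`S_{n+1}` is obtained from `S_n` by inserting `n+1` in the `η_n`-th gap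
of the one-line notation of `S_n` (the permutation process corresponding to `η`). -/
def permOf (η : ℕ → ℕ) : ℕ → ℕ → ℕ
  | 0 => fun r => r
  | 1 => fun r => r
  | (n + 2) => fun r =>
      if r = η (n + 1) then n + 2
      else if r < η (n + 1) then permOf η (n + 1) r
      else permOf η (n + 1) (r - 1)

/-- `IsIH n H` : `H` is an interval hypergraph on `[n]`: it contains `∅` and all singletons,
every edge is a subset of `[n]`, and some relabeling of `H` (equivalently, some linear order
on `[n]`) turns `H` into an interval system. -/
def IsIH (n : ℕ) (H : Set (Finset ℕ)) : Prop :=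
  (∅ : Finset ℕ) ∈ H ∧ (∀ j : ℕ, 1 ≤ j → j ≤ n → ({j} : Finset ℕ) ∈ H) ∧
    (∀ e ∈ H, e ⊆ Finset.Icc 1 n) ∧
    ∃ f : ℕ → ℕ, Set.BijOn f (Set.Icc 1 n) (Set.Icc 1 n) ∧ IsIS n (relabel f H)

/-- The hypergraph `{{i ∈ [n] : x < u_i < y} : (x,y) ∈ K} ∪ {{j} : j ∈ [n]} ∪ {∅}`
on `[n]` sampled from a set `K ⊆ ▲` at positions `u`. -/
def sampledH (n : ℕ) (K : Set (ℝ × ℝ)) (u : ℕ → ℝ) : Set (Finset ℕ) :=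
  {e | e = (∅ : Finset ℕ)} ∪ {e | ∃ j : ℕ, 1 ≤ j ∧ j ≤ n ∧ e = {j}} ∪
    {e | ∃ p ∈ K, e = (Finset.Icc 1 n).filter (fun i => p.1 < u i ∧ u i < p.2)}

/-- `(H_n)` is an exchangeable interval hypergraph on `ℕ` with respect to `μ`. -/
structure IsEIH {Ω : Type*} [MeasurableSpace Ω] (μ : Measure Ω)
    (H : ℕ → Ω → Set (Finset ℕ)) : Prop where
  meas : ∀ n, Measurable (H n)
  val : ∀ n, 1 ≤ n → ∀ᵐ ω ∂μ, IsIH n (H n ω)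
  restr : ∀ n, 1 ≤ n → ∀ᵐ ω ∂μ, H n ω = restrictH n (H (n + 1) ω)
  exch : ∀ n, 1 ≤ n → ∀ f : ℕ → ℕ, Set.BijOn f (Set.Icc 1 n) (Set.Icc 1 n) →
    Measure.map (fun ω => relabel f (H n ω)) μ = Measure.map (H n) μ

/-! ### Auxiliary lemmas -/

section Aux

open Metric

/-- A "decreasing antichain" in ℝ² is Lebesgue null. -/
lemma antichain_null_dec (N : Set (ℝ × ℝ))
    (h : ∀ p ∈ N, ∀ q ∈ N, p.1 < q.1 → q.2 ≤ p.2) : volume N = 0 := by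
  set C := closure N with hC
  have hCprop : ∀ p ∈ C, ∀ q ∈ C, p.1 < q.1 → q.2 ≤ p.2 := by
    intro p hp q hq hlt
    by_contra hgt
    push_neg at hgt
    set ε := min ((q.1 - p.1) / 2) ((q.2 - p.2) / 2) with hε
    have hε0 : 0 < ε := by
      apply lt_min <;> linarith
    obtain ⟨p', hp'N, hp'd⟩ := Metric.mem_closure_iff.1 hp ε hε0
    obtain ⟨q', hq'N, hq'd⟩ := Metric.mem_closure_iff.1 hq ε hε0
    have d1p : dist p.1 p'.1 < ε := lt_of_le_of_lt (by
      rw [Prod.dist_eq]; exact le_max_left _ _) hp'd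
    have d2p : dist p.2 p'.2 < ε := lt_of_le_of_lt (by
      rw [Prod.dist_eq]; exact le_max_right _ _) hp'd
    have d1q : dist q.1 q'.1 < ε := lt_of_le_of_lt (by
      rw [Prod.dist_eq]; exact le_max_left _ _) hq'd
    have d2q : dist q.2 q'.2 < ε := lt_of_le_of_lt (by
      rw [Prod.dist_eq]; exact le_max_right _ _) hq'd
    rw [Real.dist_eq, abs_lt] at d1p d2p d1q d2q
    have hε1 : ε ≤ (q.1 - p.1) / 2 := min_le_left _ _
    have hε2 : ε ≤ (q.2 - p.2) / 2 := min_le_right _ _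
    have h1 : p'.1 < q'.1 := by linarith
    have h2 : p'.2 < q'.2 := by linarith
    exact absurd (h p' hp'N q' hq'N h1) (not_le.2 h2)
  have hCm : MeasurableSet C := isClosed_closure.measurableSet
  have key : volume C = 0 := by
    rw [MeasureTheory.Measure.volume_eq_prod, MeasureTheory.Measure.prod_apply hCm]
    set S : ℝ → Set ℝ := fun x => Prod.mk x ⁻¹' C with hS
    set D : Set ℝ := {x | ∃ y ∈ S x, ∃ y' ∈ S x, y < y'} with hD
    have hDc : D.Countable := by
      have hsub : D ⊆ ⋃ q : ℚ, {x ∈ D | ∃ y ∈ S x, ∃ y' ∈ S x, y < (q : ℝ) ∧ (q : ℝ) < y'} := by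
        intro x hx
        obtain ⟨y, hy, y', hy', hlt⟩ := id hx
        obtain ⟨q, hq1, hq2⟩ := exists_rat_btwn hlt
        exact mem_iUnion.2 ⟨q, hx, y, hy, y', hy', hq1, hq2⟩
      refine Set.Countable.mono hsub (Set.countable_iUnion fun q => ?_)
      apply Set.Subsingleton.countable
      intro x hx x' hx'
      by_contra hne
      rcases lt_or_gt_of_ne hne with hlt | hlt
      · obtain ⟨-, y, hy, y', hy', hq1, hq2⟩ := hx
        obtain ⟨-, z, hz, z', hz', hr1, hr2⟩ := hx'
        have := hCprop (x, y) hy (x', z') hz' hlt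
        simp only at this
        linarith
      · obtain ⟨-, y, hy, y', hy', hq1, hq2⟩ := hx
        obtain ⟨-, z, hz, z', hz', hr1, hr2⟩ := hx'
        have := hCprop (x', z) hz (x, y') hy' hlt
        simp only at this
        linarith
    have hae : ∀ᵐ x : ℝ, volume (S x) = 0 := by
      have h0 : volume D = 0 := hDc.measure_zero _
      filter_upwards [measure_eq_zero_iff_ae_notMem.1 h0] with x hx
      have hss : (S x).Subsingleton := by
        intro y hy y' hy'
        by_contra hne
        rcases lt_or_gt_of_ne hne with hlt | hlt
        · exact hx ⟨y, hy, y', hy', hlt⟩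
        · exact hx ⟨y', hy', y, hy, hlt⟩
      exact hss.measure_zero _
    rw [lintegral_congr_ae hae]
    simp
  exact le_antisymm (le_trans (measure_mono subset_closure) key.le) zero_le

/-- An "increasing antichain" in ℝ² is Lebesgue null. -/
lemma antichain_null_inc (N : Set (ℝ × ℝ))
    (h : ∀ p ∈ N, ∀ q ∈ N, p.1 < q.1 → p.2 ≤ q.2) : volume N = 0 := by
  set T : ℝ × ℝ → ℝ × ℝ := fun p => (p.1, -p.2) with hT
  have hmp : MeasurePreserving T (volume : Measure (ℝ × ℝ)) volume := by
    have h2 := (MeasurePreserving.id (volume : Measure ℝ)).prod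
      (Measure.measurePreserving_neg (volume : Measure ℝ))
    rw [MeasureTheory.Measure.volume_eq_prod]
    exact h2
  have hN' : volume (T ⁻¹' N) = 0 := by
    apply antichain_null_dec
    intro p hp q hq hlt
    have := h _ hp _ hq hlt
    simp only [T] at this ⊢
    linarith [this]
  obtain ⟨G, hGsub, hGm, hG0⟩ := exists_measurable_superset_of_null hN'
  have hsub : N ⊆ T ⁻¹' G := by
    intro p hp
    have hTT : T p ∈ T ⁻¹' N := by simp [Set.mem_preimage, hp, T]
    exact hGsub hTT
  refine le_antisymm ?_ zero_le
  calc volume N ≤ volume (T ⁻¹' G) := measure_mono hsub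
    _ = volume G := hmp.measure_preimage hGm.nullMeasurableSet
    _ = 0 := hG0

/-- The diagonal of ℝ² is null. -/
lemma diag_null : volume {p : ℝ × ℝ | p.1 = p.2} = 0 := by
  have hm : MeasurableSet {p : ℝ × ℝ | p.1 = p.2} :=
    (isClosed_eq continuous_fst continuous_snd).measurableSet
  rw [MeasureTheory.Measure.volume_eq_prod, MeasureTheory.Measure.prod_apply hm]
  have : ∀ x : ℝ, (Prod.mk x ⁻¹' {p : ℝ × ℝ | p.1 = p.2}) = {x} := by
    intro x; ext y; simp [eq_comm]
  simp [this]

end Aux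

section Aux2

/-! The exceptional sets used in the almost-sure argument. -/

def V1set (S : Set (ℝ × ℝ)) (q₁ q₂ q₃ : ℚ) : Set ℝ :=
  {y | y < (q₃ : ℝ) ∧ (∃ p ∈ S, (q₁ : ℝ) < p.1 ∧ p.1 < (q₂ : ℝ) ∧ p.2 = y) ∧
    ∀ p ∈ S, ¬((q₁ : ℝ) < p.1 ∧ p.1 < (q₂ : ℝ) ∧ y < p.2 ∧ p.2 < (q₃ : ℝ))}

def V2set (S : Set (ℝ × ℝ)) (q₁ q₂ q₃ : ℚ) : Set ℝ :=
  {y | (q₃ : ℝ) < y ∧ (∃ p ∈ S, (q₁ : ℝ) < p.1 ∧ p.1 < (q₂ : ℝ) ∧ p.2 = y) ∧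
    ∀ p ∈ S, ¬((q₁ : ℝ) < p.1 ∧ p.1 < (q₂ : ℝ) ∧ (q₃ : ℝ) < p.2 ∧ p.2 < y)}

def V3set (S : Set (ℝ × ℝ)) (q₁ q₂ q₃ : ℚ) : Set ℝ :=
  {x | x < (q₁ : ℝ) ∧ (∃ p ∈ S, p.1 = x ∧ (q₂ : ℝ) < p.2 ∧ p.2 < (q₃ : ℝ)) ∧
    ∀ p ∈ S, ¬(x < p.1 ∧ p.1 < (q₁ : ℝ) ∧ (q₂ : ℝ) < p.2 ∧ p.2 < (q₃ : ℝ))}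

def V4set (S : Set (ℝ × ℝ)) (q₁ q₂ q₃ : ℚ) : Set ℝ :=
  {x | (q₁ : ℝ) < x ∧ (∃ p ∈ S, p.1 = x ∧ (q₂ : ℝ) < p.2 ∧ p.2 < (q₃ : ℝ)) ∧
    ∀ p ∈ S, ¬((q₁ : ℝ) < p.1 ∧ p.1 < x ∧ (q₂ : ℝ) < p.2 ∧ p.2 < (q₃ : ℝ))}

def Ctwset (S : Set (ℝ × ℝ)) (q₁ q₂ : ℚ) : Set (ℝ × ℝ) :=
  {p | (q₁ : ℝ) < p.1 ∧ (q₂ : ℝ) < p.2 ∧ p ∈ S ∧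
    ∀ r ∈ S, ¬((q₁ : ℝ) < r.1 ∧ r.1 < p.1 ∧ (q₂ : ℝ) < r.2 ∧ r.2 < p.2)}

def Csvset (S : Set (ℝ × ℝ)) (q₁ q₂ : ℚ) : Set (ℝ × ℝ) :=
  {p | p.1 < (q₁ : ℝ) ∧ p.2 < (q₂ : ℝ) ∧ p ∈ S ∧
    ∀ r ∈ S, ¬(p.1 < r.1 ∧ r.1 < (q₁ : ℝ) ∧ p.2 < r.2 ∧ r.2 < (q₂ : ℝ))}

def Cswset (S : Set (ℝ × ℝ)) (q₁ q₂ : ℚ) : Set (ℝ × ℝ) :=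
  {p | p.1 < (q₁ : ℝ) ∧ (q₂ : ℝ) < p.2 ∧ p ∈ S ∧
    ∀ r ∈ S, ¬(p.1 < r.1 ∧ r.1 < (q₁ : ℝ) ∧ (q₂ : ℝ) < r.2 ∧ r.2 < p.2)}

def Ctvset (S : Set (ℝ × ℝ)) (q₁ q₂ : ℚ) : Set (ℝ × ℝ) :=
  {p | (q₁ : ℝ) < p.1 ∧ p.2 < (q₂ : ℝ) ∧ p ∈ S ∧
    ∀ r ∈ S, ¬((q₁ : ℝ) < r.1 ∧ r.1 < p.1 ∧ p.2 < r.2 ∧ r.2 < (q₂ : ℝ))}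

lemma V1set_subsingleton (S : Set (ℝ × ℝ)) (q₁ q₂ q₃ : ℚ) : (V1set S q₁ q₂ q₃).Subsingleton := by
  intro y hy y' hy'
  by_contra hne
  rcases lt_or_gt_of_ne hne with hlt | hlt
  · obtain ⟨p, hpS, h1, h2, h3⟩ := hy'.2.1
    exact hy.2.2 p hpS ⟨h1, h2, by rw [h3]; exact hlt, by rw [h3]; exact hy'.1⟩
  · obtain ⟨p, hpS, h1, h2, h3⟩ := hy.2.1
    exact hy'.2.2 p hpS ⟨h1, h2, by rw [h3]; exact hlt, by rw [h3]; exact hy.1⟩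

lemma V2set_subsingleton (S : Set (ℝ × ℝ)) (q₁ q₂ q₃ : ℚ) : (V2set S q₁ q₂ q₃).Subsingleton := by
  intro y hy y' hy'
  by_contra hne
  rcases lt_or_gt_of_ne hne with hlt | hlt
  · obtain ⟨p, hpS, h1, h2, h3⟩ := hy.2.1
    exact hy'.2.2 p hpS ⟨h1, h2, by rw [h3]; exact hy.1, by rw [h3]; exact hlt⟩
  · obtain ⟨p, hpS, h1, h2, h3⟩ := hy'.2.1
    exact hy.2.2 p hpS ⟨h1, h2, by rw [h3]; exact hy'.1, by rw [h3]; exact hlt⟩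

lemma V3set_subsingleton (S : Set (ℝ × ℝ)) (q₁ q₂ q₃ : ℚ) : (V3set S q₁ q₂ q₃).Subsingleton := by
  intro x hx x' hx'
  by_contra hne
  rcases lt_or_gt_of_ne hne with hlt | hlt
  · obtain ⟨p, hpS, h1, h2, h3⟩ := hx'.2.1
    exact hx.2.2 p hpS ⟨by rw [h1]; exact hlt, by rw [h1]; exact hx'.1, h2, h3⟩
  · obtain ⟨p, hpS, h1, h2, h3⟩ := hx.2.1
    exact hx'.2.2 p hpS ⟨by rw [h1]; exact hlt, by rw [h1]; exact hx.1, h2, h3⟩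

lemma V4set_subsingleton (S : Set (ℝ × ℝ)) (q₁ q₂ q₃ : ℚ) : (V4set S q₁ q₂ q₃).Subsingleton := by
  intro x hx x' hx'
  by_contra hne
  rcases lt_or_gt_of_ne hne with hlt | hlt
  · obtain ⟨p, hpS, h1, h2, h3⟩ := hx.2.1
    exact hx'.2.2 p hpS ⟨by rw [h1]; exact hx.1, by rw [h1]; exact hlt, h2, h3⟩
  · obtain ⟨p, hpS, h1, h2, h3⟩ := hx'.2.1
    exact hx.2.2 p hpS ⟨by rw [h1]; exact hx'.1, by rw [h1]; exact hlt, h2, h3⟩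

lemma Ctwset_null (S : Set (ℝ × ℝ)) (q₁ q₂ : ℚ) : volume (Ctwset S q₁ q₂) = 0 := by
  apply antichain_null_dec
  rintro p ⟨hp1, hp2, hpS, hpe⟩ r ⟨hr1, hr2, hrS, hre⟩ hlt
  by_contra hgt
  push_neg at hgt
  exact hre p hpS ⟨hp1, hlt, hp2, hgt⟩

lemma Csvset_null (S : Set (ℝ × ℝ)) (q₁ q₂ : ℚ) : volume (Csvset S q₁ q₂) = 0 := by
  apply antichain_null_dec
  rintro p ⟨hp1, hp2, hpS, hpe⟩ r ⟨hr1, hr2, hrS, hre⟩ hlt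
  by_contra hgt
  push_neg at hgt
  exact hpe r hrS ⟨hlt, hr1, hgt, hr2⟩

lemma Cswset_null (S : Set (ℝ × ℝ)) (q₁ q₂ : ℚ) : volume (Cswset S q₁ q₂) = 0 := by
  apply antichain_null_inc
  rintro p ⟨hp1, hp2, hpS, hpe⟩ r ⟨hr1, hr2, hrS, hre⟩ hlt
  by_contra hgt
  push_neg at hgt
  exact hpe r hrS ⟨hlt, hr1, hr2, hgt⟩

lemma Ctvset_null (S : Set (ℝ × ℝ)) (q₁ q₂ : ℚ) : volume (Ctvset S q₁ q₂) = 0 := by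
  apply antichain_null_inc
  rintro p ⟨hp1, hp2, hpS, hpe⟩ r ⟨hr1, hr2, hrS, hre⟩ hlt
  by_contra hgt
  push_neg at hgt
  exact hre p hpS ⟨hp1, hlt, hgt, hp2⟩

end Aux2

section Aux3

/-! Probability glue lemmas. -/

variable {Ω : Type*} [MeasurableSpace Ω] {μ : Measure Ω} [IsProbabilityMeasure μ]
  {U : ℕ → Ω → ℝ}

lemma uniform_null_pre1 (hU : IsUniformIID μ U) (i : ℕ) {N : Set ℝ}
    (hN : volume N = 0) : μ {ω | U i ω ∈ N} = 0 := by
  obtain ⟨G, hGs, hGm, hG0⟩ := exists_measurable_superset_of_null hN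
  have h1 : μ (U i ⁻¹' G) = 0 := by
    rw [← Measure.map_apply (hU.1 i) hGm, hU.2.2 i, Measure.restrict_apply hGm]
    exact le_antisymm (le_trans (measure_mono Set.inter_subset_left) hG0.le) zero_le
  exact le_antisymm (le_trans (measure_mono fun ω hω => hGs hω) h1.le) zero_le

lemma uniform_null_pre2 (hU : IsUniformIID μ U) {i j : ℕ} (hij : i ≠ j) {M : Set (ℝ × ℝ)}
    (hM : volume M = 0) : μ {ω | (U i ω, U j ω) ∈ M} = 0 := by
  obtain ⟨G, hGs, hGm, hG0⟩ := exists_measurable_superset_of_null hM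
  have hind : IndepFun (U i) (U j) μ := hU.2.1.indepFun hij
  have hmap : Measure.map (fun ω => (U i ω, U j ω)) μ
      = (Measure.map (U i) μ).prod (Measure.map (U j) μ) :=
    (indepFun_iff_map_prod_eq_prod_map_map (hU.1 i).aemeasurable (hU.1 j).aemeasurable).1 hind
  have h1 : μ ((fun ω => (U i ω, U j ω)) ⁻¹' G) = 0 := by
    rw [← Measure.map_apply ((hU.1 i).prodMk (hU.1 j)) hGm, hmap, hU.2.2 i, hU.2.2 j,
      Measure.prod_restrict, Measure.restrict_apply hGm]
    refine le_antisymm (le_trans (measure_mono Set.inter_subset_left) ?_) zero_le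
    rw [← MeasureTheory.Measure.volume_eq_prod]
    exact hG0.le
  exact le_antisymm (le_trans (measure_mono fun ω hω => hGs hω) h1.le) zero_le

lemma uniform_mem_Icc (hU : IsUniformIID μ U) (i : ℕ) :
    ∀ᵐ ω ∂μ, U i ω ∈ Set.Icc (0 : ℝ) 1 := by
  have h1 : μ (U i ⁻¹' (Set.Icc (0 : ℝ) 1)ᶜ) = 0 := by
    rw [← Measure.map_apply (hU.1 i) measurableSet_Icc.compl, hU.2.2 i,
      Measure.restrict_apply measurableSet_Icc.compl]
    simp
  rw [ae_iff]
  exact h1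

end Aux3

section Aux4

/-! Order statistics lemmas. -/

lemma orderStat_exists_index (k : ℕ) (z : ℕ → ℝ) {i : ℕ} (h1 : 1 ≤ i) (h2 : i ≤ k) :
    ∃ j, 1 ≤ j ∧ j ≤ k ∧ z j = orderStat k z i := by
  classical
  set m := Multiset.map z (Finset.Icc 1 k).val with hm
  set l := Multiset.sort m (· ≤ ·) with hl
  have hlen : l.length = k := by
    rw [hl, Multiset.length_sort, hm, Multiset.card_map]
    simp [Nat.card_Icc]
  have hidx : i - 1 < l.length := by omega
  have hmeml : l.getD (i - 1) 0 ∈ l := by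
    rw [List.getD_eq_getElem l 0 hidx]
    exact List.getElem_mem _
  have hmemm : l.getD (i - 1) 0 ∈ m := (Multiset.mem_sort _).1 hmeml
  rw [hm] at hmemm
  obtain ⟨j, hjmem, hjz⟩ := Multiset.mem_map.1 hmemm
  rw [Finset.mem_val, Finset.mem_Icc] at hjmem
  exact ⟨j, hjmem.1, hjmem.2, by rw [hjz]; rfl⟩

lemma orderStat_lt_orderStat (k : ℕ) (z : ℕ → ℝ)
    (hinj : ∀ i j, 1 ≤ i → i ≤ k → 1 ≤ j → j ≤ k → i ≠ j → z i ≠ z j)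
    {i j : ℕ} (h1 : 1 ≤ i) (hij : i < j) (h2 : j ≤ k) :
    orderStat k z i < orderStat k z j := by
  classical
  set m := Multiset.map z (Finset.Icc 1 k).val with hm
  set l := Multiset.sort m (· ≤ ·) with hl
  have hlen : l.length = k := by
    rw [hl, Multiset.length_sort, hm, Multiset.card_map]
    simp [Nat.card_Icc]
  have hidxi : i - 1 < l.length := by omega
  have hidxj : j - 1 < l.length := by omega
  have hnodupm : m.Nodup := by
    refine Multiset.Nodup.map_on ?_ (Finset.Icc 1 k).nodup
    intro x hx y hy hxy
    rw [Finset.mem_val, Finset.mem_Icc] at hx hy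
    by_contra hne
    exact hinj x y hx.1 hx.2 hy.1 hy.2 hne hxy
  have hnodupl : l.Nodup := by
    have : (↑l : Multiset ℝ) = m := Multiset.sort_eq _ _
    rw [← Multiset.coe_nodup, this]
    exact hnodupm
  have hsorted : List.Pairwise (· ≤ ·) l := Multiset.pairwise_sort _ _
  have hle : l.get ⟨i - 1, hidxi⟩ ≤ l.get ⟨j - 1, hidxj⟩ :=
    hsorted.rel_get_of_lt (by simp [Fin.lt_def]; omega)
  have hne : l.get ⟨i - 1, hidxi⟩ ≠ l.get ⟨j - 1, hidxj⟩ := by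
    intro heq
    have := (hnodupl.get_inj_iff).1 heq
    rw [Fin.mk.injEq] at this
    omega
  have e1 : orderStat k z i = l.get ⟨i - 1, hidxi⟩ := by
    show l.getD (i - 1) 0 = _
    rw [List.getD_eq_getElem l 0 hidxi]
    rfl
  have e2 : orderStat k z j = l.get ⟨j - 1, hidxj⟩ := by
    show l.getD (j - 1) 0 = _
    rw [List.getD_eq_getElem l 0 hidxj]
    rfl
  rw [e1, e2]
  exact lt_of_le_of_ne hle hne

end Aux4

section Aux5

open Metric

lemma dist1_nonneg (p q : ℝ × ℝ) : 0 ≤ dist1 p q :=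
  add_nonneg (abs_nonneg _) (abs_nonneg _)

lemma mem_Tri_bounds {p : ℝ × ℝ} (hp : p ∈ Tri) :
    0 ≤ p.1 ∧ p.1 ≤ 1 ∧ 0 ≤ p.2 ∧ p.2 ≤ 1 := by
  obtain ⟨h1, h2, h3⟩ := hp
  exact ⟨h1, le_trans h2 h3, le_trans h1 h2, h3⟩

lemma dist1_le_two {p q : ℝ × ℝ} (hp : p ∈ Tri) (hq : q ∈ Tri) : dist1 p q ≤ 2 := by
  obtain ⟨a1, a2, a3, a4⟩ := mem_Tri_bounds hp
  obtain ⟨b1, b2, b3, b4⟩ := mem_Tri_bounds hq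
  have h1 : |p.1 - q.1| ≤ 1 := abs_le.2 ⟨by linarith, by linarith⟩
  have h2 : |p.2 - q.2| ≤ 1 := abs_le.2 ⟨by linarith, by linarith⟩
  unfold dist1
  linarith

lemma dist_le_dist1 (p q : ℝ × ℝ) : dist p q ≤ dist1 p q := by
  rw [Prod.dist_eq]
  apply max_le
  · rw [Real.dist_eq]
    unfold dist1
    linarith [abs_nonneg (p.2 - q.2)]
  · rw [Real.dist_eq]
    unfold dist1
    linarith [abs_nonneg (p.1 - q.1)]

lemma zero_mem_of_MemISinf {A : Set (ℝ × ℝ)} (hA : MemISinf A) : ((0 : ℝ), (0 : ℝ)) ∈ A :=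
  hA.2.2 ⟨0, le_refl _, zero_le_one, rfl⟩

lemma sInf_dist1_le_hd1_fst {A B : Set (ℝ × ℝ)} (hA : MemISinf A) (hB : MemISinf B)
    {q : ℝ × ℝ} (hq : q ∈ A) : sInf (dist1 q '' B) ≤ hd1 A B := by
  refine le_trans ?_ (le_max_left _ _)
  refine le_csSup ⟨2, ?_⟩ (Set.mem_image_of_mem _ hq)
  rintro x ⟨p, hp, rfl⟩
  refine csInf_le_of_le ⟨0, ?_⟩ (Set.mem_image_of_mem _ (zero_mem_of_MemISinf hB))
    (dist1_le_two (hA.2.1 hp) (hB.2.1 (zero_mem_of_MemISinf hB)))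
  rintro y ⟨r, hr, rfl⟩
  exact dist1_nonneg _ _

lemma sInf_dist1_le_hd1_snd {A B : Set (ℝ × ℝ)} (hA : MemISinf A) (hB : MemISinf B)
    {q : ℝ × ℝ} (hq : q ∈ B) : sInf (dist1 q '' A) ≤ hd1 A B := by
  refine le_trans ?_ (le_max_right _ _)
  refine le_csSup ⟨2, ?_⟩ (Set.mem_image_of_mem _ hq)
  rintro x ⟨p, hp, rfl⟩
  refine csInf_le_of_le ⟨0, ?_⟩ (Set.mem_image_of_mem _ (zero_mem_of_MemISinf hA))
    (dist1_le_two (hB.2.1 hp) (hA.2.1 (zero_mem_of_MemISinf hA)))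
  rintro y ⟨r, hr, rfl⟩
  exact dist1_nonneg _ _

lemma exists_close_fst {A B : Set (ℝ × ℝ)} (hA : MemISinf A) (hB : MemISinf B)
    {q : ℝ × ℝ} (hq : q ∈ A) {ε : ℝ} (h : hd1 A B < ε) : ∃ p ∈ B, dist1 q p < ε := by
  have h1 : sInf (dist1 q '' B) < ε := lt_of_le_of_lt (sInf_dist1_le_hd1_fst hA hB hq) h
  obtain ⟨x, ⟨p, hp, rfl⟩, hx⟩ :=
    exists_lt_of_csInf_lt ⟨_, Set.mem_image_of_mem _ (zero_mem_of_MemISinf hB)⟩ h1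
  exact ⟨p, hp, hx⟩

lemma exists_close_snd {A B : Set (ℝ × ℝ)} (hA : MemISinf A) (hB : MemISinf B)
    {q : ℝ × ℝ} (hq : q ∈ B) {ε : ℝ} (h : hd1 A B < ε) : ∃ p ∈ A, dist1 q p < ε := by
  have h1 : sInf (dist1 q '' A) < ε := lt_of_le_of_lt (sInf_dist1_le_hd1_snd hA hB hq) h
  obtain ⟨x, ⟨p, hp, rfl⟩, hx⟩ :=
    exists_lt_of_csInf_lt ⟨_, Set.mem_image_of_mem _ (zero_mem_of_MemISinf hA)⟩ h1
  exact ⟨p, hp, hx⟩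

lemma isClosed_Tri : IsClosed Tri := by
  have : Tri = {p : ℝ × ℝ | 0 ≤ p.1} ∩ ({p : ℝ × ℝ | p.1 ≤ p.2} ∩ {p : ℝ × ℝ | p.2 ≤ 1}) := by
    ext p; simp only [Tri, Set.mem_inter_iff, Set.mem_setOf_eq]
  rw [this]
  exact (isClosed_le continuous_const continuous_fst).inter
    ((isClosed_le continuous_fst continuous_snd).inter
      (isClosed_le continuous_snd continuous_const))

lemma isCompact_Tri : IsCompact Tri := by
  refine IsCompact.of_isClosed_subset (isCompact_Icc (a := ((0 : ℝ), (0 : ℝ)))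
    (b := ((1 : ℝ), (1 : ℝ)))) isClosed_Tri ?_
  intro p hp
  obtain ⟨a1, a2, a3, a4⟩ := mem_Tri_bounds hp
  rw [Set.mem_Icc]
  exact ⟨⟨a1, a3⟩, ⟨a2, a4⟩⟩

/-- Separation of a compact set from a disjoint closed set, in `dist1`. -/
lemma exists_sep_dist1 {L C : Set (ℝ × ℝ)} (hL : IsClosed L) (hLne : L.Nonempty)
    (hC : IsCompact C) (hCne : C.Nonempty) (hdisj : ∀ q ∈ C, q ∉ L) :
    ∃ δ > 0, ∀ q ∈ C, ∀ p ∈ L, δ ≤ dist1 q p := by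
  obtain ⟨q₀, hq₀, hmin⟩ := hC.exists_isMinOn hCne
    ((continuous_infDist_pt L).continuousOn)
  refine ⟨infDist q₀ L, ?_, ?_⟩
  · exact (hL.notMem_iff_infDist_pos hLne).1 (hdisj q₀ hq₀)
  · intro q hq p hp
    calc infDist q₀ L ≤ infDist q L := hmin hq
      _ ≤ dist q p := infDist_le_dist_of_mem hp
      _ ≤ dist1 q p := dist_le_dist1 q p

end Aux5

section Aux6

/-- The pointwise argument: if the sample points avoid all exceptional sets, then any point of
`L` in the closed sampling box yields a point of `L` in the open sampling box. -/
lemma pointwise_GG (L : Set (ℝ × ℝ)) (hL : MemISinf L) (k : ℕ) (z : ℕ → ℝ)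
    (h0 : ∀ j : ℕ, z j ∈ Set.Icc (0 : ℝ) 1)
    (hinj : ∀ i j, 1 ≤ i → i ≤ k → 1 ≤ j → j ≤ k → i ≠ j → z i ≠ z j)
    (h2 : ∀ (j : ℕ) (q₁ q₂ q₃ : ℚ), z j ∉ V1set L q₁ q₂ q₃ ∧ z j ∉ V2set L q₁ q₂ q₃ ∧
      z j ∉ V3set L q₁ q₂ q₃ ∧ z j ∉ V4set L q₁ q₂ q₃)
    (h3 : ∀ (i j : ℕ) (q₁ q₂ : ℚ), i ≠ j → (z i, z j) ∉ Ctwset L q₁ q₂ ∧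
      (z i, z j) ∉ Csvset L q₁ q₂ ∧ (z i, z j) ∉ Cswset L q₁ q₂ ∧ (z i, z j) ∉ Ctvset L q₁ q₂)
    {a b : ℕ} (ha : 1 ≤ a) (hab : a < b) (hbk : b ≤ k)
    (hclosed : ∃ p ∈ L, uext k (orderStat k z) (a - 1) ≤ p.1 ∧ p.1 ≤ uext k (orderStat k z) a ∧
      uext k (orderStat k z) b ≤ p.2 ∧ p.2 ≤ uext k (orderStat k z) (b + 1)) :
    ∃ p ∈ L, uext k (orderStat k z) (a - 1) < p.1 ∧ p.1 < uext k (orderStat k z) a ∧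
      uext k (orderStat k z) b < p.2 ∧ p.2 < uext k (orderStat k z) (b + 1) := by
  set u : ℕ → ℝ := orderStat k z with hu
  have hmono : ∀ {i j : ℕ}, 1 ≤ i → i < j → j ≤ k → u i < u j :=
    fun hi hij hj => orderStat_lt_orderStat k z hinj hi hij hj
  have hidx : ∀ {i : ℕ}, 1 ≤ i → i ≤ k → ∃ j, 1 ≤ j ∧ j ≤ k ∧ z j = u i :=
    fun hi1 hi2 => orderStat_exists_index k z hi1 hi2
  have hrange : ∀ {i : ℕ}, 1 ≤ i → i ≤ k → 0 ≤ u i ∧ u i ≤ 1 := by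
    intro i hi1 hi2
    obtain ⟨j, -, -, hj⟩ := hidx hi1 hi2
    rw [← hj]
    exact ⟨(h0 j).1, (h0 j).2⟩
  have hak : a ≤ k := by omega
  have ht : uext k u a = u a := by
    unfold uext; rw [if_neg (by omega), if_pos hak]
  have hv : uext k u b = u b := by
    unfold uext; rw [if_neg (by omega), if_pos hbk]
  -- strict ordering of the box corners
  have hst : uext k u (a - 1) < uext k u a := by
    rcases Nat.lt_or_ge a 2 with h' | h'
    · have ha1 : a = 1 := by omega
      rw [ht, ha1]
      show uext k u 0 < u 1
      unfold uext
      rw [if_pos rfl]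
      have := (hrange (i := 1) le_rfl (by omega)).1
      linarith
    · have hs' : uext k u (a - 1) = u (a - 1) := by
        unfold uext; rw [if_neg (by omega), if_pos (by omega)]
      rw [hs', ht]
      exact hmono (by omega) (by omega) hak
  have hvw : uext k u b < uext k u (b + 1) := by
    rcases Nat.lt_or_ge b k with h' | h'
    · have hw' : uext k u (b + 1) = u (b + 1) := by
        unfold uext; rw [if_neg (by omega), if_pos (by omega)]
      rw [hv, hw']
      exact hmono (by omega) (by omega) (by omega)
    · have hbk' : b = k := by omega
      have hw' : uext k u (b + 1) = 2 := by
        unfold uext; rw [if_neg (by omega), if_neg (by omega)]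
      rw [hv, hw']
      have := (hrange (i := b) (by omega) hbk).2
      linarith
  by_contra hopen
  have hO : ∀ p ∈ L, ¬(uext k u (a - 1) < p.1 ∧ p.1 < uext k u a ∧
      uext k u b < p.2 ∧ p.2 < uext k u (b + 1)) := by
    intro p hp hc
    exact hopen ⟨p, hp, hc⟩
  obtain ⟨p, hpL, hc1, hc2, hc3, hc4⟩ := hclosed
  obtain ⟨hp1, hp2, hp3, hp4⟩ := mem_Tri_bounds (hL.2.1 hpL)
  rcases eq_or_lt_of_le hc1 with hxs | hxs
  · -- p.1 = s; then a ≥ 2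
    have ha2 : 2 ≤ a := by
      by_contra h'
      have ha1 : a = 1 := by omega
      have : uext k u (a - 1) = -1 := by rw [ha1]; unfold uext; rw [if_pos rfl]
      rw [this] at hxs
      linarith
    have hs' : uext k u (a - 1) = u (a - 1) := by
      unfold uext; rw [if_neg (by omega), if_pos (by omega)]
    obtain ⟨i, hi1, hik, hiz⟩ := hidx (i := a - 1) (by omega) (by omega)
    have hzi : z i = p.1 := by rw [hiz, ← hs', ← hxs]
    rcases eq_or_lt_of_le hc3 with hyv | hyv
    · -- corner (s, v) : use Csvset
      obtain ⟨j, hj1, hjk, hjz⟩ := hidx (i := b) (by omega) hbk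
      have hzj : z j = p.2 := by rw [hjz, ← hv, ← hyv]
      have hne : i ≠ j := by
        intro heq
        have h5 : u (a - 1) < u b := hmono (by omega) (by omega) hbk
        rw [← hiz, heq, hjz] at h5
        exact lt_irrefl _ h5
      obtain ⟨q₁, hq₁s, hq₁t⟩ := exists_rat_btwn hst
      obtain ⟨q₂, hq₂v, hq₂w⟩ := exists_rat_btwn hvw
      refine (h3 i j q₁ q₂ hne).2.1 ⟨?_, ?_, ?_, ?_⟩
      · show z i < (q₁ : ℝ); rw [hzi, ← hxs]; exact hq₁s
      · show z j < (q₂ : ℝ); rw [hzj, ← hyv]; exact hq₂v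
      · show (z i, z j) ∈ L
        have : (z i, z j) = p := Prod.ext hzi hzj
        rw [this]; exact hpL
      · rintro r hrL ⟨hr1, hr2, hr3, hr4⟩
        refine hO r hrL ⟨?_, ?_, ?_, ?_⟩
        · rw [hxs]; rw [hzi] at hr1; exact hr1
        · exact lt_trans hr2 hq₁t
        · rw [hyv]; rw [hzj] at hr3; exact hr3
        · exact lt_trans hr4 hq₂w
    · rcases eq_or_lt_of_le hc4 with hyw | hyw
      · -- corner (s, w) : use Cswset
        have hbk1 : b + 1 ≤ k := by
          by_contra h'
          have : uext k u (b + 1) = 2 := by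
            unfold uext; rw [if_neg (by omega), if_neg (by omega)]
          rw [this] at hyw
          linarith
        obtain ⟨j, hj1, hjk, hjz⟩ := hidx (i := b + 1) (by omega) hbk1
        have hw' : uext k u (b + 1) = u (b + 1) := by
          unfold uext; rw [if_neg (by omega), if_pos (by omega)]
        have hzj : z j = p.2 := by rw [hjz, ← hw', ← hyw]
        have hne : i ≠ j := by
          intro heq
          have h5 : u (a - 1) < u (b + 1) := hmono (by omega) (by omega) hbk1
          rw [← hiz, heq, hjz] at h5
          exact lt_irrefl _ h5
        obtain ⟨q₁, hq₁s, hq₁t⟩ := exists_rat_btwn hst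
        obtain ⟨q₂, hq₂v, hq₂w⟩ := exists_rat_btwn hvw
        refine (h3 i j q₁ q₂ hne).2.2.1 ⟨?_, ?_, ?_, ?_⟩
        · show z i < (q₁ : ℝ); rw [hzi, ← hxs]; exact hq₁s
        · show (q₂ : ℝ) < z j; rw [hzj, hyw]; exact hq₂w
        · show (z i, z j) ∈ L
          have : (z i, z j) = p := Prod.ext hzi hzj
          rw [this]; exact hpL
        · rintro r hrL ⟨hr1, hr2, hr3, hr4⟩
          refine hO r hrL ⟨?_, ?_, ?_, ?_⟩
          · rw [hxs]; rw [hzi] at hr1; exact hr1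
          · exact lt_trans hr2 hq₁t
          · exact lt_trans hq₂v hr3
          · rw [← hyw]; rw [hzj] at hr4; exact hr4
      · -- edge x = s, y interior : use V3set
        obtain ⟨q₁, hq₁s, hq₁t⟩ := exists_rat_btwn hst
        obtain ⟨q₂, hq₂v, hq₂p⟩ := exists_rat_btwn hyv
        obtain ⟨q₃, hq₃p, hq₃w⟩ := exists_rat_btwn hyw
        refine (h2 i q₁ q₂ q₃).2.2.1 ⟨?_, ?_, ?_⟩
        · show z i < (q₁ : ℝ); rw [hzi, ← hxs]; exact hq₁s
        · exact ⟨p, hpL, hzi.symm, hq₂p, hq₃p⟩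
        · rintro r hrL ⟨hr1, hr2, hr3, hr4⟩
          refine hO r hrL ⟨?_, ?_, ?_, ?_⟩
          · rw [hxs]; rw [hzi] at hr1; exact hr1
          · exact lt_trans hr2 hq₁t
          · exact lt_trans hq₂v hr3
          · exact lt_trans hr4 hq₃w
  · rcases eq_or_lt_of_le hc2 with hxt | hxt
    · -- p.1 = t
      obtain ⟨i, hi1, hik, hiz⟩ := hidx ha hak
      have hzi : z i = p.1 := by rw [hiz, ← ht, hxt]
      rcases eq_or_lt_of_le hc3 with hyv | hyv
      · -- corner (t, v) : use Ctvset
        obtain ⟨j, hj1, hjk, hjz⟩ := hidx (i := b) (by omega) hbk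
        have hzj : z j = p.2 := by rw [hjz, ← hv, ← hyv]
        have hne : i ≠ j := by
          intro heq
          have h5 : u a < u b := hmono ha hab hbk
          rw [← hiz, heq, hjz] at h5
          exact lt_irrefl _ h5
        obtain ⟨q₁, hq₁s, hq₁t⟩ := exists_rat_btwn hst
        obtain ⟨q₂, hq₂v, hq₂w⟩ := exists_rat_btwn hvw
        refine (h3 i j q₁ q₂ hne).2.2.2 ⟨?_, ?_, ?_, ?_⟩
        · show (q₁ : ℝ) < z i; rw [hzi, hxt]; exact hq₁t
        · show z j < (q₂ : ℝ); rw [hzj, ← hyv]; exact hq₂v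
        · show (z i, z j) ∈ L
          have : (z i, z j) = p := Prod.ext hzi hzj
          rw [this]; exact hpL
        · rintro r hrL ⟨hr1, hr2, hr3, hr4⟩
          refine hO r hrL ⟨?_, ?_, ?_, ?_⟩
          · exact lt_trans hq₁s hr1
          · rw [hzi, hxt] at hr2; exact hr2
          · rw [hyv]; rw [hzj] at hr3; exact hr3
          · exact lt_trans hr4 hq₂w
      · rcases eq_or_lt_of_le hc4 with hyw | hyw
        · -- corner (t, w) : use Ctwset
          have hbk1 : b + 1 ≤ k := by
            by_contra h'
            have : uext k u (b + 1) = 2 := by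
              unfold uext; rw [if_neg (by omega), if_neg (by omega)]
            rw [this] at hyw
            linarith
          obtain ⟨j, hj1, hjk, hjz⟩ := hidx (i := b + 1) (by omega) hbk1
          have hw' : uext k u (b + 1) = u (b + 1) := by
            unfold uext; rw [if_neg (by omega), if_pos (by omega)]
          have hzj : z j = p.2 := by rw [hjz, ← hw', ← hyw]
          have hne : i ≠ j := by
            intro heq
            have h5 : u a < u (b + 1) := hmono ha (by omega) hbk1
            rw [← hiz, heq, hjz] at h5
            exact lt_irrefl _ h5
          obtain ⟨q₁, hq₁s, hq₁t⟩ := exists_rat_btwn hst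
          obtain ⟨q₂, hq₂v, hq₂w⟩ := exists_rat_btwn hvw
          refine (h3 i j q₁ q₂ hne).1 ⟨?_, ?_, ?_, ?_⟩
          · show (q₁ : ℝ) < z i; rw [hzi, hxt]; exact hq₁t
          · show (q₂ : ℝ) < z j; rw [hzj, hyw]; exact hq₂w
          · show (z i, z j) ∈ L
            have : (z i, z j) = p := Prod.ext hzi hzj
            rw [this]; exact hpL
          · rintro r hrL ⟨hr1, hr2, hr3, hr4⟩
            refine hO r hrL ⟨?_, ?_, ?_, ?_⟩
            · exact lt_trans hq₁s hr1
            · rw [hzi, hxt] at hr2; exact hr2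
            · exact lt_trans hq₂v hr3
            · rw [← hyw]; rw [hzj] at hr4; exact hr4
        · -- edge x = t, y interior : use V4set
          obtain ⟨q₁, hq₁s, hq₁t⟩ := exists_rat_btwn hst
          obtain ⟨q₂, hq₂v, hq₂p⟩ := exists_rat_btwn hyv
          obtain ⟨q₃, hq₃p, hq₃w⟩ := exists_rat_btwn hyw
          refine (h2 i q₁ q₂ q₃).2.2.2 ⟨?_, ?_, ?_⟩
          · show (q₁ : ℝ) < z i; rw [hzi, hxt]; exact hq₁t
          · exact ⟨p, hpL, hzi.symm, hq₂p, hq₃p⟩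
          · rintro r hrL ⟨hr1, hr2, hr3, hr4⟩
            refine hO r hrL ⟨?_, ?_, ?_, ?_⟩
            · exact lt_trans hq₁s hr1
            · rw [hzi, hxt] at hr2; exact hr2
            · exact lt_trans hq₂v hr3
            · exact lt_trans hr4 hq₃w
    · -- x interior
      rcases eq_or_lt_of_le hc3 with hyv | hyv
      · -- edge y = v : use V1set
        obtain ⟨j, hj1, hjk, hjz⟩ := hidx (i := b) (by omega) hbk
        have hzj : z j = p.2 := by rw [hjz, ← hv, ← hyv]
        obtain ⟨q₁, hq₁s, hq₁p⟩ := exists_rat_btwn hxs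
        obtain ⟨q₂, hq₂p, hq₂t⟩ := exists_rat_btwn hxt
        obtain ⟨q₃, hq₃v, hq₃w⟩ := exists_rat_btwn hvw
        refine (h2 j q₁ q₂ q₃).1 ⟨?_, ?_, ?_⟩
        · show z j < (q₃ : ℝ); rw [hzj, ← hyv]; exact hq₃v
        · exact ⟨p, hpL, hq₁p, hq₂p, hzj.symm⟩
        · rintro r hrL ⟨hr1, hr2, hr3, hr4⟩
          refine hO r hrL ⟨?_, ?_, ?_, ?_⟩
          · exact lt_trans hq₁s hr1
          · exact lt_trans hr2 hq₂t
          · rw [hyv]; rw [hzj] at hr3; exact hr3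
          · exact lt_trans hr4 hq₃w
      · rcases eq_or_lt_of_le hc4 with hyw | hyw
        · -- edge y = w : use V2set
          have hbk1 : b + 1 ≤ k := by
            by_contra h'
            have : uext k u (b + 1) = 2 := by
              unfold uext; rw [if_neg (by omega), if_neg (by omega)]
            rw [this] at hyw
            linarith
          obtain ⟨j, hj1, hjk, hjz⟩ := hidx (i := b + 1) (by omega) hbk1
          have hw' : uext k u (b + 1) = u (b + 1) := by
            unfold uext; rw [if_neg (by omega), if_pos (by omega)]
          have hzj : z j = p.2 := by rw [hjz, ← hw', ← hyw]
          obtain ⟨q₁, hq₁s, hq₁p⟩ := exists_rat_btwn hxs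
          obtain ⟨q₂, hq₂p, hq₂t⟩ := exists_rat_btwn hxt
          obtain ⟨q₃, hq₃v, hq₃w⟩ := exists_rat_btwn hvw
          refine (h2 j q₁ q₂ q₃).2.1 ⟨?_, ?_, ?_⟩
          · show (q₃ : ℝ) < z j; rw [hzj, hyw]; exact hq₃w
          · exact ⟨p, hpL, hq₁p, hq₂p, hzj.symm⟩
          · rintro r hrL ⟨hr1, hr2, hr3, hr4⟩
            refine hO r hrL ⟨?_, ?_, ?_, ?_⟩
            · exact lt_trans hq₁s hr1
            · exact lt_trans hr2 hq₂t
            · exact lt_trans hq₃v hr3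
            · rw [← hyw]; rw [hzj] at hr4; exact hr4
        · exact hO p hpL ⟨hxs, hxt, hyv, hyw⟩

end Aux6

section Aux7

open Filter

/-- Deterministic part: if the open/closed sampling boxes of `L` agree in nonemptiness, then the
sampled interval systems converge. -/
lemma eventual_eq_phiInf (K : ℕ → Set (ℝ × ℝ)) (L : Set (ℝ × ℝ))
    (hK : ∀ m, MemISinf (K m)) (hL : MemISinf L)
    (hconv : Tendsto (fun m => hd1 (K m) L) atTop (nhds 0)) (k : ℕ) (u : ℕ → ℝ)
    (hGG : ∀ a b : ℕ, 1 ≤ a → a < b → b ≤ k →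
      (∃ p ∈ L, uext k u (a - 1) ≤ p.1 ∧ p.1 ≤ uext k u a ∧
        uext k u b ≤ p.2 ∧ p.2 ≤ uext k u (b + 1)) →
      ∃ p ∈ L, uext k u (a - 1) < p.1 ∧ p.1 < uext k u a ∧
        uext k u b < p.2 ∧ p.2 < uext k u (b + 1)) :
    ∀ᶠ m in atTop, phiInf k (K m) u = phiInf k L u := by
  have main : ∀ a b : ℕ, 1 ≤ a → a < b → b ≤ k → ∀ᶠ m in atTop,
      ((∃ p ∈ K m, uext k u (a - 1) < p.1 ∧ p.1 < uext k u a ∧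
          uext k u b < p.2 ∧ p.2 < uext k u (b + 1)) ↔
        (∃ p ∈ L, uext k u (a - 1) < p.1 ∧ p.1 < uext k u a ∧
          uext k u b < p.2 ∧ p.2 < uext k u (b + 1))) := by
    intro a b ha hab hbk
    by_cases hLb : ∃ p ∈ L, uext k u (a - 1) < p.1 ∧ p.1 < uext k u a ∧
        uext k u b < p.2 ∧ p.2 < uext k u (b + 1)
    · obtain ⟨p, hpL, h1, h2, h3, h4⟩ := hLb
      have hε : (0 : ℝ) < min (min (p.1 - uext k u (a - 1)) (uext k u a - p.1))
          (min (p.2 - uext k u b) (uext k u (b + 1) - p.2)) := by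
        apply lt_min <;> apply lt_min <;> linarith
      filter_upwards [hconv.eventually_lt_const hε] with m hm
      constructor
      · intro _
        exact ⟨p, hpL, h1, h2, h3, h4⟩
      · intro _
        obtain ⟨q, hqK, hq⟩ := exists_close_snd (hK m) hL hpL hm
        have hd : |p.1 - q.1| + |p.2 - q.2| <
            min (min (p.1 - uext k u (a - 1)) (uext k u a - p.1))
              (min (p.2 - uext k u b) (uext k u (b + 1) - p.2)) := hq
        have m1 : min (min (p.1 - uext k u (a - 1)) (uext k u a - p.1))
            (min (p.2 - uext k u b) (uext k u (b + 1) - p.2)) ≤ p.1 - uext k u (a - 1) :=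
          le_trans (min_le_left _ _) (min_le_left _ _)
        have m2 : min (min (p.1 - uext k u (a - 1)) (uext k u a - p.1))
            (min (p.2 - uext k u b) (uext k u (b + 1) - p.2)) ≤ uext k u a - p.1 :=
          le_trans (min_le_left _ _) (min_le_right _ _)
        have m3 : min (min (p.1 - uext k u (a - 1)) (uext k u a - p.1))
            (min (p.2 - uext k u b) (uext k u (b + 1) - p.2)) ≤ p.2 - uext k u b :=
          le_trans (min_le_right _ _) (min_le_left _ _)
        have m4 : min (min (p.1 - uext k u (a - 1)) (uext k u a - p.1))
            (min (p.2 - uext k u b) (uext k u (b + 1) - p.2)) ≤ uext k u (b + 1) - p.2 :=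
          le_trans (min_le_right _ _) (min_le_right _ _)
        have e1 := le_abs_self (p.1 - q.1)
        have e1' := neg_abs_le (p.1 - q.1)
        have e2 := le_abs_self (p.2 - q.2)
        have e2' := neg_abs_le (p.2 - q.2)
        have n1 := abs_nonneg (p.1 - q.1)
        have n2 := abs_nonneg (p.2 - q.2)
        exact ⟨q, hqK, by linarith, by linarith, by linarith, by linarith⟩
    · have hCl : ¬∃ p ∈ L, uext k u (a - 1) ≤ p.1 ∧ p.1 ≤ uext k u a ∧
          uext k u b ≤ p.2 ∧ p.2 ≤ uext k u (b + 1) :=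
        fun h => hLb (hGG a b ha hab hbk h)
      set C := Tri ∩ (Set.Icc (uext k u (a - 1)) (uext k u a) ×ˢ
        Set.Icc (uext k u b) (uext k u (b + 1))) with hCdef
      by_cases hCne : C.Nonempty
      · have hdisj : ∀ q ∈ C, q ∉ L := by
          rintro q ⟨hqT, hqB⟩ hqL
          rw [Set.mem_prod, Set.mem_Icc, Set.mem_Icc] at hqB
          exact hCl ⟨q, hqL, hqB.1.1, hqB.1.2, hqB.2.1, hqB.2.2⟩
        have hLne : L.Nonempty := ⟨_, zero_mem_of_MemISinf hL⟩
        have hCc : IsCompact C := isCompact_Tri.inter_right (isClosed_Icc.prod isClosed_Icc)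
        obtain ⟨δ, hδ, hsep⟩ := exists_sep_dist1 hL.1.isClosed hLne hCc hCne hdisj
        filter_upwards [hconv.eventually_lt_const hδ] with m hm
        constructor
        · rintro ⟨q, hqK, b1, b2, b3, b4⟩
          exfalso
          have hqC : q ∈ C := ⟨(hK m).2.1 hqK, Set.mem_prod.2
            ⟨Set.mem_Icc.2 ⟨b1.le, b2.le⟩, Set.mem_Icc.2 ⟨b3.le, b4.le⟩⟩⟩
          obtain ⟨p, hpL, hdq⟩ := exists_close_fst (hK m) hL hqK hm
          exact absurd hdq (not_lt.2 (hsep q hqC p hpL))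
        · intro h
          exact absurd h hLb
      · refine Filter.Eventually.of_forall fun m => ?_
        constructor
        · rintro ⟨q, hqK, b1, b2, b3, b4⟩
          exact absurd ⟨q, (hK m).2.1 hqK, Set.mem_prod.2
            ⟨Set.mem_Icc.2 ⟨b1.le, b2.le⟩, Set.mem_Icc.2 ⟨b3.le, b4.le⟩⟩⟩ hCne
        · intro h
          exact absurd h hLb
  have hall : ∀ᶠ m in atTop, ∀ a ∈ Finset.range (k + 1), ∀ b ∈ Finset.range (k + 1),
      (1 ≤ a → a < b → b ≤ k →
      ((∃ p ∈ K m, uext k u (a - 1) < p.1 ∧ p.1 < uext k u a ∧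
          uext k u b < p.2 ∧ p.2 < uext k u (b + 1)) ↔
        (∃ p ∈ L, uext k u (a - 1) < p.1 ∧ p.1 < uext k u a ∧
          uext k u b < p.2 ∧ p.2 < uext k u (b + 1)))) := by
    rw [Filter.eventually_all_finset]
    intro a _
    rw [Filter.eventually_all_finset]
    intro b _
    by_cases h : 1 ≤ a ∧ a < b ∧ b ≤ k
    · exact (main a b h.1 h.2.1 h.2.2).mono fun m hm _ _ _ => hm
    · exact Filter.Eventually.of_forall fun m h1 h2 h3 => absurd ⟨h1, h2, h3⟩ h
  refine hall.mono fun m hm => ?_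
  ext e
  simp only [phiInf, Set.mem_union, Set.mem_setOf_eq]
  refine or_congr Iff.rfl ?_
  constructor
  · rintro ⟨a, b, h1, h2, h3, he, hex⟩
    exact ⟨a, b, h1, h2, h3, he, (hm a (Finset.mem_range.2 (by omega)) b
      (Finset.mem_range.2 (by omega)) h1 h2 h3).1 hex⟩
  · rintro ⟨a, b, h1, h2, h3, he, hex⟩
    exact ⟨a, b, h1, h2, h3, he, (hm a (Finset.mem_range.2 (by omega)) b
      (Finset.mem_range.2 (by omega)) h1 h2 h3).2 hex⟩

end Aux7

section Aux8

variable {Ω : Type*} [MeasurableSpace Ω] {μ : Measure Ω} [IsProbabilityMeasure μ]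
  {U : ℕ → Ω → ℝ}

lemma ae_nmem_of_null1 (hU : IsUniformIID μ U) (i : ℕ) {N : Set ℝ}
    (hN : volume N = 0) : ∀ᵐ ω ∂μ, U i ω ∉ N := by
  have h := uniform_null_pre1 hU i hN
  rw [ae_iff]
  simpa using h

lemma ae_nmem_of_null2 (hU : IsUniformIID μ U) {i j : ℕ} (hij : i ≠ j) {M : Set (ℝ × ℝ)}
    (hM : volume M = 0) : ∀ᵐ ω ∂μ, (U i ω, U j ω) ∉ M := by
  have h := uniform_null_pre2 hU hij hM
  rw [ae_iff]
  simpa using h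

end Aux8


/-- Let `(U_i)` be iid uniform on `[0,1]` and `K_m → K` in `(IS(∞), d_H)`.
Then for every `k`, almost surely `φ^∞_k(K_m, U_{1:k},…,U_{k:k}) = φ^∞_k(K, U_{1:k},…,U_{k:k})`
for all sufficiently large `m` (a.s. convergence in the discrete space `IS(k)`). -/
theorem stmt12 {Ω : Type*} [MeasurableSpace Ω] (μ : Measure Ω) [IsProbabilityMeasure μ]
    (U : ℕ → Ω → ℝ) (hU : IsUniformIID μ U)
    (K : ℕ → Set (ℝ × ℝ)) (L : Set (ℝ × ℝ))
    (hK : ∀ m, MemISinf (K m)) (hL : MemISinf L)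
    (hconv : Tendsto (fun m => hd1 (K m) L) atTop (nhds 0)) :
    ∀ k, 1 ≤ k → ∀ᵐ ω ∂μ, ∃ N, ∀ m, N ≤ m →
      phiInf k (K m) (fun i => orderStat k (fun s => U s ω) i) =
        phiInf k L (fun i => orderStat k (fun s => U s ω) i) := by
  intro k hk
  have hA : ∀ᵐ ω ∂μ, ∀ j : ℕ, U j ω ∈ Set.Icc (0 : ℝ) 1 :=
    MeasureTheory.ae_all_iff.2 fun j => uniform_mem_Icc hU j
  have hB : ∀ᵐ ω ∂μ, ∀ i j : ℕ, i ≠ j → U i ω ≠ U j ω := by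
    rw [MeasureTheory.ae_all_iff]
    intro i
    rw [MeasureTheory.ae_all_iff]
    intro j
    by_cases hij : i = j
    · exact Filter.Eventually.of_forall fun ω h => absurd hij h
    · exact (ae_nmem_of_null2 hU hij diag_null).mono fun ω h _ heq => h heq
  have hC : ∀ᵐ ω ∂μ, ∀ (j : ℕ) (q₁ q₂ q₃ : ℚ),
      U j ω ∉ V1set L q₁ q₂ q₃ ∧ U j ω ∉ V2set L q₁ q₂ q₃ ∧
      U j ω ∉ V3set L q₁ q₂ q₃ ∧ U j ω ∉ V4set L q₁ q₂ q₃ := by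
    rw [MeasureTheory.ae_all_iff]; intro j
    rw [MeasureTheory.ae_all_iff]; intro q₁
    rw [MeasureTheory.ae_all_iff]; intro q₂
    rw [MeasureTheory.ae_all_iff]; intro q₃
    exact (ae_nmem_of_null1 hU j ((V1set_subsingleton L q₁ q₂ q₃).measure_zero _)).and
      ((ae_nmem_of_null1 hU j ((V2set_subsingleton L q₁ q₂ q₃).measure_zero _)).and
      ((ae_nmem_of_null1 hU j ((V3set_subsingleton L q₁ q₂ q₃).measure_zero _)).and
      (ae_nmem_of_null1 hU j ((V4set_subsingleton L q₁ q₂ q₃).measure_zero _))))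
  have hD : ∀ᵐ ω ∂μ, ∀ (i j : ℕ) (q₁ q₂ : ℚ), i ≠ j →
      ((U i ω, U j ω) ∉ Ctwset L q₁ q₂ ∧ (U i ω, U j ω) ∉ Csvset L q₁ q₂ ∧
        (U i ω, U j ω) ∉ Cswset L q₁ q₂ ∧ (U i ω, U j ω) ∉ Ctvset L q₁ q₂) := by
    rw [MeasureTheory.ae_all_iff]; intro i
    rw [MeasureTheory.ae_all_iff]; intro j
    rw [MeasureTheory.ae_all_iff]; intro q₁
    rw [MeasureTheory.ae_all_iff]; intro q₂
    by_cases hij : i = j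
    · exact Filter.Eventually.of_forall fun ω h => absurd hij h
    · exact ((ae_nmem_of_null2 hU hij (Ctwset_null L q₁ q₂)).and
        ((ae_nmem_of_null2 hU hij (Csvset_null L q₁ q₂)).and
        ((ae_nmem_of_null2 hU hij (Cswset_null L q₁ q₂)).and
        (ae_nmem_of_null2 hU hij (Ctvset_null L q₁ q₂))))).mono fun ω h _ => h
  filter_upwards [hA, hB, hC, hD] with ω hA' hB' hC' hD'
  have hev := eventual_eq_phiInf K L hK hL hconv k
      (fun i => orderStat k (fun s => U s ω) i)
      (fun a b ha hab hbk h => pointwise_GG L hL k (fun s => U s ω) hA'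
        (fun i j _ _ _ _ hne => hB' i j hne) hC' hD' ha hab hbk h)
  exact Filter.eventually_atTop.1 hev

end
end

section
/- Let (Y₁,Y₂,Y₃,Y₄) be a random vector with values in [0,1]⁴ satisfying Y₁ < Y₂ < Y₃ < Y₄ almost surely, and such that for all i ≠ j the conditional distribution of Y_i given Y_j is almost surely nonatomic (diffuse). Let R := [Y₁,Y₂] × [Y₃,Y₄] and int(R) := (Y₁,Y₂) × (Y₃,Y₄). Then for every nonempty compact subset K ⊆ ▲, the set {K ∩ R ≠ ∅ and K ∩ int(R) = ∅} is a measurable event of probability zero; i.e., the random rectangle R almost surely intersects K in its interior or not at all. -/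
open TopologicalSpace Filter Set MeasureTheory ProbabilityTheory
open scoped ENNReal symmDiff

noncomputable section

namespace St17

open scoped Topology

def dlt (n : ℕ) : ℝ := 1 / (n + 1)

lemma dlt_pos (n : ℕ) : 0 < dlt n := by unfold dlt; positivity

/-- `x` is the first coordinate of an "east-isolated" point of `S`. -/
def isoE (S : Set (ℝ × ℝ)) : Set ℝ :=
  {x | ∃ y : ℝ, (x, y) ∈ S ∧ ∃ n : ℕ, ∀ q ∈ S,
    ¬(x < q.1 ∧ q.1 < x + dlt n ∧ y - dlt n < q.2 ∧ q.2 < y + dlt n)}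

/-- "north-east isolated" points of `S`. -/
def isoNE (S : Set (ℝ × ℝ)) : Set (ℝ × ℝ) :=
  {p | p ∈ S ∧ ∃ n : ℕ, ∀ q ∈ S,
    ¬(p.1 < q.1 ∧ q.1 < p.1 + dlt n ∧ p.2 < q.2 ∧ q.2 < p.2 + dlt n)}

lemma floor_band {ε : ℝ} (hε : 0 < ε) (y : ℝ) :
    ∃ m : ℤ, (m : ℝ) * ε ≤ y ∧ y < ((m : ℝ) + 1) * ε := by
  refine ⟨⌊y / ε⌋, ?_, ?_⟩
  · rw [← le_div_iff₀ hε]; exact Int.floor_le _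
  · rw [← div_lt_iff₀ hε]; exact Int.lt_floor_add_one _

lemma exists_dlt {ε : ℝ} (hε : 0 < ε) : ∃ n : ℕ, dlt n < ε := by
  obtain ⟨n, hn⟩ := exists_nat_one_div_lt hε
  exact ⟨n, by unfold dlt; exact_mod_cast hn⟩

lemma sep_countable {A : Set ℝ} {ε : ℝ} (hε : 0 < ε)
    (h : ∀ x ∈ A, ∀ y ∈ A, x < y → x + ε ≤ y) : A.Countable := by
  have hsub : A ⊆ ⋃ k : ℤ, A ∩ Ico ((k : ℝ) * ε) (((k : ℝ) + 1) * ε) := by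
    intro x hx
    obtain ⟨m, h1, h2⟩ := floor_band hε x
    exact mem_iUnion.2 ⟨m, hx, h1, h2⟩
  refine (Set.countable_iUnion fun k => ?_).mono hsub
  refine Set.Subsingleton.countable ?_
  rintro x ⟨hxA, hx1, hx2⟩ y ⟨hyA, hy1, hy2⟩
  by_contra hne
  rcases lt_or_gt_of_ne hne with hlt | hlt
  · have := h x hxA y hyA hlt; nlinarith
  · have := h y hyA x hxA hlt; nlinarith

lemma isoE_countable (S : Set (ℝ × ℝ)) : (isoE S).Countable := by
  have hsub : isoE S ⊆ ⋃ (n : ℕ) (m : ℤ),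
      {x | ∃ y : ℝ, (x, y) ∈ S ∧ (m : ℝ) * dlt n ≤ y ∧ y < ((m : ℝ) + 1) * dlt n ∧
        ∀ q ∈ S, ¬(x < q.1 ∧ q.1 < x + dlt n ∧ y - dlt n < q.2 ∧ q.2 < y + dlt n)} := by
    rintro x ⟨y, hyS, n, hn⟩
    obtain ⟨m, h1, h2⟩ := floor_band (dlt_pos n) y
    exact mem_iUnion.2 ⟨n, mem_iUnion.2 ⟨m, y, hyS, h1, h2, hn⟩⟩
  refine (Set.countable_iUnion fun n => Set.countable_iUnion fun m => ?_).mono hsub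
  refine sep_countable (dlt_pos n) ?_
  rintro x ⟨y, hyS, hy1, hy2, hemp⟩ x' ⟨y', hyS', hy1', hy2', _⟩ hxx'
  by_contra hlt
  push_neg at hlt
  exact hemp (x', y') hyS' ⟨hxx', by linarith, by constructor <;> simp <;> linarith⟩

lemma antichain_cover {A : Set (ℝ × ℝ)} (hA : A ⊆ Set.Icc (0:ℝ) 1 ×ˢ Set.Icc (0:ℝ) 1)
    (hanti : ∀ p ∈ A, ∀ q ∈ A, p.1 < q.1 → q.2 ≤ p.2) :
    ∃ g : ℝ → ℝ, Measurable g ∧ ∃ V : Set ℝ, V.Countable ∧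
      ∀ p ∈ A, p.2 = g p.1 ∨ p.1 ∈ V := by
  set B : ℝ → Set ℝ := fun x => {y | ∃ x', x ≤ x' ∧ (x', y) ∈ A} with hB
  set g : ℝ → ℝ := fun x => sSup (B x) with hg
  have hBsub : ∀ x, B x ⊆ Set.Icc 0 1 := by
    rintro x y ⟨x', _, hm⟩; exact (hA hm).2
  have hBbdd : ∀ x, BddAbove (B x) := fun x =>
    (bddAbove_Icc (a := (0:ℝ)) (b := 1)).mono (hBsub x)
  have hg0 : ∀ x, 0 ≤ g x := by
    intro x
    rcases (B x).eq_empty_or_nonempty with he | ⟨y, hy⟩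
    · rw [hg]; simp only; rw [he, Real.sSup_empty]
    · exact le_trans (hBsub x hy).1 (le_csSup (hBbdd x) hy)
  have hmono : Antitone g := by
    intro x x' hxx'
    rcases (B x').eq_empty_or_nonempty with he | hne
    · calc g x' = 0 := by rw [hg]; simp only; rw [he, Real.sSup_empty]
        _ ≤ g x := hg0 x
    · refine csSup_le_csSup (hBbdd x) hne ?_
      rintro y ⟨x'', h1, h2⟩; exact ⟨x'', le_trans hxx' h1, h2⟩
  have hupper : ∀ p ∈ A, ∀ t, p.1 < t → g t ≤ p.2 := by
    intro p hp t ht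
    rcases (B t).eq_empty_or_nonempty with he | hne
    · calc g t = 0 := by rw [hg]; simp only; rw [he, Real.sSup_empty]
        _ ≤ p.2 := (hA hp).2.1
    · refine csSup_le hne ?_
      rintro y ⟨x', hx', hm⟩
      exact hanti p hp (x', y) hm (lt_of_lt_of_le ht hx')
  refine ⟨g, hmono.measurable, {x | ¬ContinuousAt g x},
    hmono.countable_not_continuousAt, ?_⟩
  rintro ⟨x, y⟩ hp
  by_cases hc : ContinuousAt g x
  · left
    have hle : y ≤ g x := le_csSup (hBbdd x) ⟨x, le_rfl, hp⟩
    have hge : g x ≤ y := by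
      have htend : Tendsto g (𝓝[>] x) (𝓝 (g x)) :=
        (hc.tendsto).mono_left nhdsWithin_le_nhds
      refine le_of_tendsto htend ?_
      filter_upwards [self_mem_nhdsWithin] with t ht
      exact hupper (x, y) hp t ht
    exact le_antisymm hle hge
  · right; exact hc

lemma corner_null {Ω : Type*} [MeasurableSpace Ω] (μ : Measure Ω) (S : Set (ℝ × ℝ))
    (hS : S ⊆ Set.Icc (0:ℝ) 1 ×ˢ Set.Icc (0:ℝ) 1) (W Z : Ω → ℝ)
    (hgr : ∀ g : ℝ → ℝ, Measurable g → μ {ω | Z ω = g (W ω)} = 0)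
    (hct : ∀ V : Set ℝ, V.Countable → μ {ω | W ω ∈ V} = 0) :
    μ {ω | (W ω, Z ω) ∈ isoNE S} = 0 := by
  set P : ℕ → ℤ → ℤ → Set (ℝ × ℝ) := fun n k l =>
    {p | p ∈ S ∧ (∀ q ∈ S, ¬(p.1 < q.1 ∧ q.1 < p.1 + dlt n ∧ p.2 < q.2 ∧ q.2 < p.2 + dlt n)) ∧
      (k : ℝ) * dlt n ≤ p.1 ∧ p.1 < ((k : ℝ) + 1) * dlt n ∧
      (l : ℝ) * dlt n ≤ p.2 ∧ p.2 < ((l : ℝ) + 1) * dlt n} with hP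
  have hsub : {ω | (W ω, Z ω) ∈ isoNE S} ⊆
      ⋃ (n : ℕ) (k : ℤ) (l : ℤ), {ω | (W ω, Z ω) ∈ P n k l} := by
    rintro ω ⟨hm, n, hn⟩
    obtain ⟨k, hk1, hk2⟩ := floor_band (dlt_pos n) (W ω)
    obtain ⟨l, hl1, hl2⟩ := floor_band (dlt_pos n) (Z ω)
    exact mem_iUnion.2 ⟨n, mem_iUnion.2 ⟨k, mem_iUnion.2 ⟨l, hm, hn, hk1, hk2, hl1, hl2⟩⟩⟩
  refine measure_mono_null hsub (measure_iUnion_null fun n => measure_iUnion_null fun k =>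
    measure_iUnion_null fun l => ?_)
  have hAsub : P n k l ⊆ Set.Icc (0:ℝ) 1 ×ˢ Set.Icc (0:ℝ) 1 := fun p hp => hS hp.1
  have hanti : ∀ p ∈ P n k l, ∀ q ∈ P n k l, p.1 < q.1 → q.2 ≤ p.2 := by
    rintro p ⟨hpS, hpiso, hpk1, hpk2, hpl1, hpl2⟩ q ⟨hqS, _, hqk1, hqk2, hql1, hql2⟩ hlt
    by_contra hgt
    push_neg at hgt
    exact hpiso q hqS ⟨hlt, by nlinarith, hgt, by nlinarith⟩
  obtain ⟨g, hgm, V, hV, hcov⟩ := antichain_cover hAsub hanti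
  refine measure_mono_null (fun ω hω => ?_) (measure_union_null (hgr g hgm) (hct V hV))
  rcases hcov _ hω with h | h
  · exact Or.inl h
  · exact Or.inr h

lemma graph_null {Ω : Type*} [MeasurableSpace Ω] (μ : Measure Ω) [IsProbabilityMeasure μ]
    (X Z : Ω → ℝ) (hX : Measurable X) (hZ : Measurable Z)
    (hdiff : ∀ᵐ x ∂(Measure.map X μ), ∀ r : ℝ, condDistrib Z X μ x {r} = 0)
    (g : ℝ → ℝ) (hg : Measurable g) : μ {ω | Z ω = g (X ω)} = 0 := by
  have hmS : MeasurableSet {p : ℝ × ℝ | p.2 = g p.1} :=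
    measurableSet_eq_fun measurable_snd (hg.comp measurable_fst)
  have hpair : Measurable fun ω => (X ω, Z ω) := hX.prodMk hZ
  have h1 : {ω | Z ω = g (X ω)} = (fun ω => (X ω, Z ω)) ⁻¹' {p : ℝ × ℝ | p.2 = g p.1} := rfl
  rw [h1, ← Measure.map_apply hpair hmS]
  haveI : IsProbabilityMeasure (μ.map fun ω => (X ω, Z ω)) :=
    Measure.isProbabilityMeasure_map hpair.aemeasurable
  have h2 : μ.map (fun ω => (X ω, Z ω)) = μ.map X ⊗ₘ condDistrib Z X μ := by
    rw [condDistrib]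
    conv_rhs => rw [← Measure.fst_map_prodMk (X := X) (μ := μ) hZ]
    exact (Measure.disintegrate _ _).symm
  rw [h2, Measure.compProd_apply hmS]
  rw [lintegral_eq_zero_iff (Kernel.measurable_kernel_prodMk_left hmS)]
  filter_upwards [hdiff] with x hx
  have : Prod.mk x ⁻¹' {p : ℝ × ℝ | p.2 = g p.1} = {g x} := by
    ext y; simp [Set.mem_preimage, Set.mem_singleton_iff]
  rw [this]
  exact hx (g x)

lemma decomp {K : Set (ℝ × ℝ)} {a b c d : ℝ} (hab : a < b) (hcd : c < d)
    (hne : (K ∩ Set.Icc a b ×ˢ Set.Icc c d).Nonempty)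
    (hemp : ¬(K ∩ Set.Ioo a b ×ˢ Set.Ioo c d).Nonempty) :
    a ∈ isoE K ∨
    (1 - b) ∈ isoE ((fun p : ℝ × ℝ => (1 - p.1, p.2)) '' K) ∨
    c ∈ isoE ((fun p : ℝ × ℝ => (p.2, p.1)) '' K) ∨
    (1 - d) ∈ isoE ((fun p : ℝ × ℝ => (1 - p.2, p.1)) '' K) ∨
    (a, c) ∈ isoNE K ∨
    (a, 1 - d) ∈ isoNE ((fun p : ℝ × ℝ => (p.1, 1 - p.2)) '' K) ∨
    (1 - b, c) ∈ isoNE ((fun p : ℝ × ℝ => (1 - p.1, p.2)) '' K) ∨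
    (1 - b, 1 - d) ∈ isoNE ((fun p : ℝ × ℝ => (1 - p.1, 1 - p.2)) '' K) := by
  obtain ⟨⟨p1, p2⟩, hpK, ⟨hpa, hpb⟩, ⟨hpc, hpd⟩⟩ := hne
  simp only at hpa hpb hpc hpd
  rcases eq_or_lt_of_le hpa with ha | ha
  · subst ha
    rcases eq_or_lt_of_le hpc with hc | hc
    · subst hc
      refine Or.inr (Or.inr (Or.inr (Or.inr (Or.inl ?_))))
      obtain ⟨n, hn⟩ := exists_dlt (lt_min (sub_pos.2 hab) (sub_pos.2 hcd))
      rw [lt_min_iff] at hn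
      refine ⟨hpK, n, ?_⟩
      rintro ⟨q1, q2⟩ hq ⟨h1, h2, h3, h4⟩
      simp only at h1 h2 h3 h4
      exact hemp ⟨(q1, q2), hq, ⟨h1, by linarith [hn.1]⟩, ⟨h3, by linarith [hn.2]⟩⟩
    · rcases eq_or_lt_of_le hpd with hd | hd
      · subst hd
        refine Or.inr (Or.inr (Or.inr (Or.inr (Or.inr (Or.inl ?_)))))
        obtain ⟨n, hn⟩ := exists_dlt (lt_min (sub_pos.2 hab) (sub_pos.2 hcd))
        rw [lt_min_iff] at hn
        refine ⟨⟨_, hpK, rfl⟩, n, ?_⟩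
        rintro _ ⟨⟨q1, q2⟩, hq, rfl⟩ ⟨h1, h2, h3, h4⟩
        simp only at h1 h2 h3 h4
        exact hemp ⟨(q1, q2), hq, ⟨by linarith, by linarith [hn.1]⟩,
          ⟨by linarith [hn.2], by linarith⟩⟩
      · refine Or.inl ?_
        obtain ⟨n, hn⟩ := exists_dlt (lt_min (sub_pos.2 hab) (lt_min (sub_pos.2 hc) (sub_pos.2 hd)))
        rw [lt_min_iff, lt_min_iff] at hn
        refine ⟨p2, hpK, n, ?_⟩
        rintro ⟨q1, q2⟩ hq ⟨h1, h2, h3, h4⟩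
        simp only at h1 h2 h3 h4
        exact hemp ⟨(q1, q2), hq, ⟨h1, by linarith [hn.1]⟩,
          ⟨by linarith [hn.2.1], by linarith [hn.2.2]⟩⟩
  · rcases eq_or_lt_of_le hpb with hb | hb
    · subst hb
      rcases eq_or_lt_of_le hpc with hc | hc
      · subst hc
        refine Or.inr (Or.inr (Or.inr (Or.inr (Or.inr (Or.inr (Or.inl ?_))))))
        obtain ⟨n, hn⟩ := exists_dlt (lt_min (sub_pos.2 hab) (sub_pos.2 hcd))
        rw [lt_min_iff] at hn
        refine ⟨⟨_, hpK, rfl⟩, n, ?_⟩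
        rintro _ ⟨⟨q1, q2⟩, hq, rfl⟩ ⟨h1, h2, h3, h4⟩
        simp only at h1 h2 h3 h4
        exact hemp ⟨(q1, q2), hq, ⟨by linarith [hn.1], by linarith⟩, ⟨h3, by linarith [hn.2]⟩⟩
      · rcases eq_or_lt_of_le hpd with hd | hd
        · subst hd
          refine Or.inr (Or.inr (Or.inr (Or.inr (Or.inr (Or.inr (Or.inr ?_))))))
          obtain ⟨n, hn⟩ := exists_dlt (lt_min (sub_pos.2 hab) (sub_pos.2 hcd))
          rw [lt_min_iff] at hn
          refine ⟨⟨_, hpK, rfl⟩, n, ?_⟩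
          rintro _ ⟨⟨q1, q2⟩, hq, rfl⟩ ⟨h1, h2, h3, h4⟩
          simp only at h1 h2 h3 h4
          exact hemp ⟨(q1, q2), hq, ⟨by linarith [hn.1], by linarith⟩,
            ⟨by linarith [hn.2], by linarith⟩⟩
        · refine Or.inr (Or.inl ?_)
          obtain ⟨n, hn⟩ := exists_dlt (lt_min (sub_pos.2 hab) (lt_min (sub_pos.2 hc) (sub_pos.2 hd)))
          rw [lt_min_iff, lt_min_iff] at hn
          refine ⟨p2, ⟨_, hpK, rfl⟩, n, ?_⟩
          rintro _ ⟨⟨q1, q2⟩, hq, rfl⟩ ⟨h1, h2, h3, h4⟩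
          simp only at h1 h2 h3 h4
          exact hemp ⟨(q1, q2), hq, ⟨by linarith [hn.1], by linarith⟩,
            ⟨by linarith [hn.2.1], by linarith [hn.2.2]⟩⟩
    · rcases eq_or_lt_of_le hpc with hc | hc
      · subst hc
        refine Or.inr (Or.inr (Or.inl ?_))
        obtain ⟨n, hn⟩ := exists_dlt (lt_min (sub_pos.2 hcd) (lt_min (sub_pos.2 ha) (sub_pos.2 hb)))
        rw [lt_min_iff, lt_min_iff] at hn
        refine ⟨p1, ⟨_, hpK, rfl⟩, n, ?_⟩
        rintro _ ⟨⟨q1, q2⟩, hq, rfl⟩ ⟨h1, h2, h3, h4⟩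
        simp only at h1 h2 h3 h4
        exact hemp ⟨(q1, q2), hq, ⟨by linarith [hn.2.1], by linarith [hn.2.2]⟩,
          ⟨h1, by linarith [hn.1]⟩⟩
      · rcases eq_or_lt_of_le hpd with hd | hd
        · subst hd
          refine Or.inr (Or.inr (Or.inr (Or.inl ?_)))
          obtain ⟨n, hn⟩ := exists_dlt (lt_min (sub_pos.2 hcd) (lt_min (sub_pos.2 ha) (sub_pos.2 hb)))
          rw [lt_min_iff, lt_min_iff] at hn
          refine ⟨p1, ⟨_, hpK, rfl⟩, n, ?_⟩
          rintro _ ⟨⟨q1, q2⟩, hq, rfl⟩ ⟨h1, h2, h3, h4⟩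
          simp only at h1 h2 h3 h4
          exact hemp ⟨(q1, q2), hq, ⟨by linarith [hn.2.1], by linarith [hn.2.2]⟩,
            ⟨by linarith [hn.1], by linarith⟩⟩
        · exact absurd ⟨(p1, p2), hpK, ⟨ha, hb⟩, ⟨hc, hd⟩⟩ hemp

lemma isClosed_hits (K : Set (ℝ × ℝ)) (hK : IsCompact K) :
    IsClosed {v : ℝ × ℝ × ℝ × ℝ |
      (K ∩ Set.Icc v.1 v.2.1 ×ˢ Set.Icc v.2.2.1 v.2.2.2).Nonempty} := by
  refine IsSeqClosed.isClosed ?_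
  intro v w hv hlim
  choose p hp using hv
  have hpK : ∀ n, p n ∈ K := fun n => (hp n).1
  obtain ⟨q, hqK, φ, hφ, hφtend⟩ := hK.tendsto_subseq hpK
  have h1 : Tendsto (fun n => (v (φ n)).1) atTop (𝓝 w.1) :=
    ((continuous_fst.tendsto w).comp hlim).comp hφ.tendsto_atTop
  have h2 : Tendsto (fun n => (v (φ n)).2.1) atTop (𝓝 w.2.1) :=
    ((continuous_fst.comp continuous_snd).tendsto w |>.comp hlim).comp hφ.tendsto_atTop
  have h3 : Tendsto (fun n => (v (φ n)).2.2.1) atTop (𝓝 w.2.2.1) :=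
    ((continuous_fst.comp (continuous_snd.comp continuous_snd)).tendsto w |>.comp
      hlim).comp hφ.tendsto_atTop
  have h4 : Tendsto (fun n => (v (φ n)).2.2.2) atTop (𝓝 w.2.2.2) :=
    ((continuous_snd.comp (continuous_snd.comp continuous_snd)).tendsto w |>.comp
      hlim).comp hφ.tendsto_atTop
  have hq1 : Tendsto (fun n => (p (φ n)).1) atTop (𝓝 q.1) :=
    (continuous_fst.tendsto q).comp hφtend
  have hq2 : Tendsto (fun n => (p (φ n)).2) atTop (𝓝 q.2) :=
    (continuous_snd.tendsto q).comp hφtend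
  refine ⟨q, hqK, ⟨?_, ?_⟩, ⟨?_, ?_⟩⟩
  · exact le_of_tendsto_of_tendsto' h1 hq1 fun n => ((hp (φ n)).2.1).1
  · exact le_of_tendsto_of_tendsto' hq1 h2 fun n => ((hp (φ n)).2.1).2
  · exact le_of_tendsto_of_tendsto' h3 hq2 fun n => ((hp (φ n)).2.2).1
  · exact le_of_tendsto_of_tendsto' hq2 h4 fun n => ((hp (φ n)).2.2).2

lemma isOpen_hits (K : Set (ℝ × ℝ)) :
    IsOpen {v : ℝ × ℝ × ℝ × ℝ |
      (K ∩ Set.Ioo v.1 v.2.1 ×ˢ Set.Ioo v.2.2.1 v.2.2.2).Nonempty} := by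
  have heq : {v : ℝ × ℝ × ℝ × ℝ |
      (K ∩ Set.Ioo v.1 v.2.1 ×ˢ Set.Ioo v.2.2.1 v.2.2.2).Nonempty} =
      ⋃ p ∈ K, {v : ℝ × ℝ × ℝ × ℝ | v.1 < p.1 ∧ p.1 < v.2.1 ∧
        v.2.2.1 < p.2 ∧ p.2 < v.2.2.2} := by
    ext v
    simp only [Set.mem_setOf_eq, Set.mem_iUnion]
    constructor
    · rintro ⟨p, hpK, ⟨h1, h2⟩, ⟨h3, h4⟩⟩
      exact ⟨p, hpK, h1, h2, h3, h4⟩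
    · rintro ⟨p, hpK, h1, h2, h3, h4⟩
      exact ⟨p, hpK, ⟨h1, h2⟩, ⟨h3, h4⟩⟩
  rw [heq]
  refine isOpen_biUnion fun p _ => ?_
  refine IsOpen.inter (isOpen_lt continuous_fst continuous_const) ?_
  refine IsOpen.inter (isOpen_lt continuous_const (continuous_fst.comp continuous_snd)) ?_
  exact IsOpen.inter
    (isOpen_lt (continuous_fst.comp (continuous_snd.comp continuous_snd)) continuous_const)
    (isOpen_lt continuous_const (continuous_snd.comp (continuous_snd.comp continuous_snd)))

end St17

/-- Let `(Y₁,Y₂,Y₃,Y₄)` be a random vector with values in `[0,1]⁴`,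
a.s. strictly increasing, such that for `i ≠ j` the conditional distribution of `Y_i` given
`Y_j` is a.s. nonatomic. Then for every nonempty compact `K ⊆ ▲`, the event that the random
rectangle `R = [Y₁,Y₂] × [Y₃,Y₄]` meets `K` while its interior does not is measurable and has
probability zero: `R` a.s. intersects `K` in its interior or not at all. -/
theorem stmt17 {Ω : Type*} [MeasurableSpace Ω] (μ : Measure Ω) [IsProbabilityMeasure μ]
    (Y : Fin 4 → Ω → ℝ) (hYmeas : ∀ i, Measurable (Y i))
    (hord : ∀ᵐ ω ∂μ, (∀ i, Y i ω ∈ Set.Icc (0 : ℝ) 1) ∧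
      Y 0 ω < Y 1 ω ∧ Y 1 ω < Y 2 ω ∧ Y 2 ω < Y 3 ω)
    (hdiff : ∀ i j, i ≠ j → ∀ᵐ x ∂(Measure.map (Y j) μ),
      ∀ r : ℝ, condDistrib (Y i) (Y j) μ x {r} = 0)
    (K : Set (ℝ × ℝ)) (hKne : K.Nonempty) (hKcomp : IsCompact K) (hKsub : K ⊆ Tri) :
    MeasurableSet {ω | (K ∩ Set.Icc (Y 0 ω) (Y 1 ω) ×ˢ Set.Icc (Y 2 ω) (Y 3 ω)).Nonempty ∧
        ¬(K ∩ Set.Ioo (Y 0 ω) (Y 1 ω) ×ˢ Set.Ioo (Y 2 ω) (Y 3 ω)).Nonempty} ∧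
    μ {ω | (K ∩ Set.Icc (Y 0 ω) (Y 1 ω) ×ˢ Set.Icc (Y 2 ω) (Y 3 ω)).Nonempty ∧
        ¬(K ∩ Set.Ioo (Y 0 ω) (Y 1 ω) ×ˢ Set.Ioo (Y 2 ω) (Y 3 ω)).Nonempty} = 0 := by
  classical
  have hK01 : K ⊆ Set.Icc (0:ℝ) 1 ×ˢ Set.Icc (0:ℝ) 1 := by
    intro p hp
    obtain ⟨h1, h2, h3⟩ := hKsub hp
    exact ⟨⟨h1, le_trans h2 h3⟩, le_trans h1 h2, h3⟩
  -- measurability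
  have hφmeas : Measurable fun ω => (Y 0 ω, Y 1 ω, Y 2 ω, Y 3 ω) :=
    (hYmeas 0).prodMk ((hYmeas 1).prodMk ((hYmeas 2).prodMk (hYmeas 3)))
  have hEmeas : MeasurableSet {ω |
      (K ∩ Set.Icc (Y 0 ω) (Y 1 ω) ×ˢ Set.Icc (Y 2 ω) (Y 3 ω)).Nonempty ∧
      ¬(K ∩ Set.Ioo (Y 0 ω) (Y 1 ω) ×ˢ Set.Ioo (Y 2 ω) (Y 3 ω)).Nonempty} := by
    have heq : {ω | (K ∩ Set.Icc (Y 0 ω) (Y 1 ω) ×ˢ Set.Icc (Y 2 ω) (Y 3 ω)).Nonempty ∧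
        ¬(K ∩ Set.Ioo (Y 0 ω) (Y 1 ω) ×ˢ Set.Ioo (Y 2 ω) (Y 3 ω)).Nonempty} =
        (fun ω => (Y 0 ω, Y 1 ω, Y 2 ω, Y 3 ω)) ⁻¹'
          ({v : ℝ × ℝ × ℝ × ℝ | (K ∩ Set.Icc v.1 v.2.1 ×ˢ Set.Icc v.2.2.1 v.2.2.2).Nonempty}
            ∩ {v : ℝ × ℝ × ℝ × ℝ |
              (K ∩ Set.Ioo v.1 v.2.1 ×ˢ Set.Ioo v.2.2.1 v.2.2.2).Nonempty}ᶜ) := rfl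
    rw [heq]
    exact ((St17.isClosed_hits K hKcomp).measurableSet.inter
      (St17.isOpen_hits K).measurableSet.compl).preimage hφmeas
  refine ⟨hEmeas, ?_⟩
  -- the basic null events
  have hgraph : ∀ i j : Fin 4, i ≠ j → ∀ g : ℝ → ℝ, Measurable g →
      μ {ω | Y i ω = g (Y j ω)} = 0 := fun i j hij g hg =>
    St17.graph_null μ (Y j) (Y i) (hYmeas j) (hYmeas i) (hdiff i j hij) g hg
  have hcount : ∀ i : Fin 4, ∀ V : Set ℝ, V.Countable → μ {ω | Y i ω ∈ V} = 0 := by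
    intro i V hV
    obtain ⟨j, hij⟩ : ∃ j : Fin 4, i ≠ j := by
      by_cases h : i = 0
      · exact ⟨1, by subst h; decide⟩
      · exact ⟨0, h⟩
    have hsub : {ω | Y i ω ∈ V} ⊆ ⋃ r ∈ V, {ω | Y i ω = r} := fun ω h =>
      Set.mem_biUnion h rfl
    exact measure_mono_null hsub ((measure_biUnion_null_iff hV).2
      fun r _ => hgraph i j hij (fun _ => r) measurable_const)
  have hinj : Function.Injective (fun x : ℝ => 1 - x) := fun x y h => by
    simp only at h; linarith
  -- the transformed compact sets
  set K2 : Set (ℝ × ℝ) := (fun p : ℝ × ℝ => (1 - p.1, p.2)) '' K with hK2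
  set K3 : Set (ℝ × ℝ) := (fun p : ℝ × ℝ => (p.2, p.1)) '' K with hK3
  set K4 : Set (ℝ × ℝ) := (fun p : ℝ × ℝ => (1 - p.2, p.1)) '' K with hK4
  set K6 : Set (ℝ × ℝ) := (fun p : ℝ × ℝ => (p.1, 1 - p.2)) '' K with hK6
  set K8 : Set (ℝ × ℝ) := (fun p : ℝ × ℝ => (1 - p.1, 1 - p.2)) '' K with hK8
  have hK6sub : K6 ⊆ Set.Icc (0:ℝ) 1 ×ˢ Set.Icc (0:ℝ) 1 := by
    rintro _ ⟨p, hp, rfl⟩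
    obtain ⟨⟨u1, u2⟩, v1, v2⟩ := hK01 hp
    exact ⟨⟨u1, u2⟩, by constructor <;> simp <;> linarith⟩
  have hK2sub : K2 ⊆ Set.Icc (0:ℝ) 1 ×ˢ Set.Icc (0:ℝ) 1 := by
    rintro _ ⟨p, hp, rfl⟩
    obtain ⟨⟨u1, u2⟩, v1, v2⟩ := hK01 hp
    exact ⟨by constructor <;> simp <;> linarith, v1, v2⟩
  have hK8sub : K8 ⊆ Set.Icc (0:ℝ) 1 ×ˢ Set.Icc (0:ℝ) 1 := by
    rintro _ ⟨p, hp, rfl⟩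
    obtain ⟨⟨u1, u2⟩, v1, v2⟩ := hK01 hp
    exact ⟨by constructor <;> simp <;> linarith, by constructor <;> simp <;> linarith⟩
  -- the eight null events
  have he1 : μ {ω | Y 0 ω ∈ St17.isoE K} = 0 := hcount 0 _ (St17.isoE_countable K)
  have he2 : μ {ω | (1 - Y 1 ω) ∈ St17.isoE K2} = 0 := by
    have : {ω | (1 - Y 1 ω) ∈ St17.isoE K2} =
        {ω | Y 1 ω ∈ (fun x : ℝ => 1 - x) ⁻¹' St17.isoE K2} := rfl
    rw [this]
    exact hcount 1 _ ((St17.isoE_countable K2).preimage hinj)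
  have he3 : μ {ω | Y 2 ω ∈ St17.isoE K3} = 0 := hcount 2 _ (St17.isoE_countable K3)
  have he4 : μ {ω | (1 - Y 3 ω) ∈ St17.isoE K4} = 0 := by
    have : {ω | (1 - Y 3 ω) ∈ St17.isoE K4} =
        {ω | Y 3 ω ∈ (fun x : ℝ => 1 - x) ⁻¹' St17.isoE K4} := rfl
    rw [this]
    exact hcount 3 _ ((St17.isoE_countable K4).preimage hinj)
  have he5 : μ {ω | (Y 0 ω, Y 2 ω) ∈ St17.isoNE K} = 0 := by
    refine St17.corner_null μ K hK01 (Y 0) (Y 2) ?_ ?_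
    · exact fun g hg => hgraph 2 0 (by decide) g hg
    · exact fun V hV => hcount 0 V hV
  have he6 : μ {ω | (Y 0 ω, 1 - Y 3 ω) ∈ St17.isoNE K6} = 0 := by
    refine St17.corner_null μ K6 hK6sub (Y 0) (fun ω => 1 - Y 3 ω) ?_ ?_
    · intro g hg
      have : {ω | (fun ω => 1 - Y 3 ω) ω = g (Y 0 ω)} =
          {ω | Y 3 ω = (fun x => 1 - g x) (Y 0 ω)} := by
        ext ω; simp only [Set.mem_setOf_eq]; constructor <;> intro h <;> linarith
      rw [this]
      exact hgraph 3 0 (by decide) _ (measurable_const.sub hg)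
    · exact fun V hV => hcount 0 V hV
  have he7 : μ {ω | (1 - Y 1 ω, Y 2 ω) ∈ St17.isoNE K2} = 0 := by
    refine St17.corner_null μ K2 hK2sub (fun ω => 1 - Y 1 ω) (Y 2) ?_ ?_
    · intro g hg
      exact hgraph 2 1 (by decide) (fun x => g (1 - x))
        (hg.comp (measurable_const.sub measurable_id))
    · intro V hV
      have : {ω | (fun ω => 1 - Y 1 ω) ω ∈ V} =
          {ω | Y 1 ω ∈ (fun x : ℝ => 1 - x) ⁻¹' V} := rfl
      rw [this]
      exact hcount 1 _ (hV.preimage hinj)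
  have he8 : μ {ω | (1 - Y 1 ω, 1 - Y 3 ω) ∈ St17.isoNE K8} = 0 := by
    refine St17.corner_null μ K8 hK8sub (fun ω => 1 - Y 1 ω) (fun ω => 1 - Y 3 ω) ?_ ?_
    · intro g hg
      have : {ω | (fun ω => 1 - Y 3 ω) ω = g ((fun ω => 1 - Y 1 ω) ω)} =
          {ω | Y 3 ω = (fun x => 1 - g (1 - x)) (Y 1 ω)} := by
        ext ω; simp only [Set.mem_setOf_eq]; constructor <;> intro h <;> linarith
      rw [this]
      exact hgraph 3 1 (by decide) _
        (measurable_const.sub (hg.comp (measurable_const.sub measurable_id)))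
    · intro V hV
      have : {ω | (fun ω => 1 - Y 1 ω) ω ∈ V} =
          {ω | Y 1 ω ∈ (fun x : ℝ => 1 - x) ⁻¹' V} := rfl
      rw [this]
      exact hcount 1 _ (hV.preimage hinj)
  have hN : μ {ω | ¬((∀ i, Y i ω ∈ Set.Icc (0 : ℝ) 1) ∧
      Y 0 ω < Y 1 ω ∧ Y 1 ω < Y 2 ω ∧ Y 2 ω < Y 3 ω)} = 0 := by
    exact ae_iff.mp hord
  -- decomposition of the event
  refine measure_mono_null (fun ω hω => ?_)
    (measure_union_null hN (measure_union_null he1 (measure_union_null he2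
      (measure_union_null he3 (measure_union_null he4 (measure_union_null he5
        (measure_union_null he6 (measure_union_null he7 he8))))))))
  by_cases hG : (∀ i, Y i ω ∈ Set.Icc (0 : ℝ) 1) ∧
      Y 0 ω < Y 1 ω ∧ Y 1 ω < Y 2 ω ∧ Y 2 ω < Y 3 ω
  · obtain ⟨hne, hemp⟩ := hω
    rcases St17.decomp hG.2.1 hG.2.2.2 hne hemp with h | h | h | h | h | h | h | h
    · exact Or.inr (Or.inl h)
    · exact Or.inr (Or.inr (Or.inl h))
    · exact Or.inr (Or.inr (Or.inr (Or.inl h)))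
    · exact Or.inr (Or.inr (Or.inr (Or.inr (Or.inl h))))
    · exact Or.inr (Or.inr (Or.inr (Or.inr (Or.inr (Or.inl h)))))
    · exact Or.inr (Or.inr (Or.inr (Or.inr (Or.inr (Or.inr (Or.inl h))))))
    · exact Or.inr (Or.inr (Or.inr (Or.inr (Or.inr (Or.inr (Or.inr (Or.inl h)))))))
    · exact Or.inr (Or.inr (Or.inr (Or.inr (Or.inr (Or.inr (Or.inr (Or.inr h)))))))
  · exact Or.inl hG

end
end
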